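/- arXiv:2112.01884 — 8 statements merged into one kernel-verified Lean document; each statement's English description precedes it below -/
import Mathlib

section
/- Let A, B be two distinct 2-stable k-subsets of {1,...,n} with |A ∩ B| = 1, where n ≥ 2k+2. Then the distance between A and B in SG(n,k) is 2 or 3. -/
/-- The cycle graph `C_n` on vertex set `ZMod n` (representing `{1,…,n}` cyclically). -/
def CycleGraph (n : ℕ) : SimpleGraph (ZMod n) where
  Adj i j := i ≠ j ∧ (i + 1 = j ∨ j + 1 = i)
  symm := ⟨fun i j ⟨h, h2⟩ => ⟨h.symm, h2.symm⟩⟩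
  loopless := ⟨fun i ⟨h, _⟩ => h rfl⟩

/-- A subset of `ZMod n` is 2-stable if it contains no two cyclically consecutive elements. -/
def Stable2 (n : ℕ) (S : Finset (ZMod n)) : Prop := ∀ i ∈ S, i + 1 ∉ S

/-- Vertices of the Schrijver graph: 2-stable `k`-subsets of `{1,…,n}`. -/
def SGVert (n k : ℕ) : Type := {S : Finset (ZMod n) // S.card = k ∧ Stable2 n S}

/-- The Schrijver graph `SG(n,k)`: 2-stable `k`-subsets, adjacent iff disjoint. -/
def SG (n k : ℕ) : SimpleGraph (SGVert n k) where
  Adj A B := A ≠ B ∧ Disjoint A.1 B.1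
  symm := ⟨fun A B ⟨h, h2⟩ => ⟨h.symm, h2.symm⟩⟩
  loopless := ⟨fun A ⟨h, _⟩ => h rfl⟩

open Finset

lemma zmod_two_ne_zero {n : ℕ} (hn : 6 ≤ n) : (2 : ZMod n) ≠ 0 := by
  intro h
  have : ((2 : ℕ) : ZMod n) = 0 := by exact_mod_cast h
  have := (ZMod.natCast_eq_zero_iff 2 n).mp this
  have := Nat.le_of_dvd (by norm_num) this
  omega

lemma zmod_one_ne_zero {n : ℕ} (hn : 6 ≤ n) : (1 : ZMod n) ≠ 0 := by
  intro h
  have : ((1 : ℕ) : ZMod n) = 0 := by exact_mod_cast h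
  have := (ZMod.natCast_eq_zero_iff 1 n).mp this
  have := Nat.le_of_dvd (by norm_num) this
  omega

/-- Key construction: if `A ∩ B = {x}` and `x - 2 ∉ A`, there is a path `A — C — D — B`. -/
lemma key_path {n k : ℕ} (hn : 6 ≤ n) (A B : SGVert n k) (x : ZMod n)
    (hxA : x ∈ A.1) (hxB : x ∈ B.1) (hcap : A.1 ∩ B.1 = {x}) (hx2 : x - 2 ∉ A.1) :
    ∃ C D : SGVert n k, (SG n k).Adj A C ∧ (SG n k).Adj C D ∧ (SG n k).Adj D B := by
  obtain ⟨hAcard, hSA⟩ := A.2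
  obtain ⟨hBcard, hSB⟩ := B.2
  have h1 : (1 : ZMod n) ≠ 0 := zmod_one_ne_zero hn
  have h2 : (2 : ZMod n) ≠ 0 := zmod_two_ne_zero hn
  -- basic stability consequences
  have hpred : ∀ y : ZMod n, y ∈ A.1 → y - 1 ∉ A.1 := by
    intro y hy h
    have := hSA (y - 1) h
    rw [sub_add_cancel] at this
    exact this hy
  have hpredB : ∀ y : ZMod n, y ∈ B.1 → y - 1 ∉ B.1 := by
    intro y hy h
    have := hSB (y - 1) h
    rw [sub_add_cancel] at this
    exact this hy
  set A' : Finset (ZMod n) := A.1.erase x with hA'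
  have hA'sub : A' ⊆ A.1 := erase_subset _ _
  have hA'card : A'.card = k - 1 := by rw [hA', card_erase_of_mem hxA, hAcard]
  have hk1 : 1 ≤ k := by
    rw [← hAcard]; exact card_pos.mpr ⟨x, hxA⟩
  -- x+1, x-1, x-2 are not in A
  have hxp1A : x + 1 ∉ A.1 := hSA x hxA
  have hxm1A : x - 1 ∉ A.1 := hpred x hxA
  have hxp1B : x + 1 ∉ B.1 := hSB x hxB
  have hxm1B : x - 1 ∉ B.1 := hpredB x hxB
  -- the sets C and D
  set Cs : Finset (ZMod n) := insert (x + 1) (A'.image (· + 1)) with hCs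
  set Ds : Finset (ZMod n) := insert (x - 1) A' with hDs
  have hmemC : ∀ y : ZMod n, y ∈ Cs ↔ y = x + 1 ∨ (y - 1 ∈ A.1 ∧ y - 1 ≠ x) := by
    intro y
    simp only [hCs, mem_insert, mem_image, hA', mem_erase]
    constructor
    · rintro (h | ⟨a, ⟨hax, haA⟩, rfl⟩)
      · exact Or.inl h
      · right
        constructor
        · simpa using haA
        · simpa using hax
    · rintro (h | ⟨hy, hyx⟩)
      · exact Or.inl h
      · exact Or.inr ⟨y - 1, ⟨hyx, hy⟩, by ring⟩
  have hmemD : ∀ y : ZMod n, y ∈ Ds ↔ y = x - 1 ∨ (y ∈ A.1 ∧ y ≠ x) := by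
    intro y
    simp only [hDs, mem_insert, hA', mem_erase, and_comm]
  -- cardinalities
  have hCcard : Cs.card = k := by
    rw [hCs, card_insert_of_notMem, card_image_of_injective _ (add_left_injective 1),
      hA'card]
    · omega
    · intro h
      rw [mem_image] at h
      obtain ⟨a, ha, h⟩ := h
      have : a = x := by exact add_right_cancel h
      rw [hA', mem_erase] at ha
      exact ha.1 this
  have hDcard : Ds.card = k := by
    rw [hDs, card_insert_of_notMem, hA'card]
    · omega
    · intro h
      rw [hA', mem_erase] at h
      exact hxm1A h.2
  -- stability of C
  have hCstable : Stable2 n Cs := by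
    intro y hy h
    rw [hmemC] at hy h
    rcases hy with rfl | ⟨hy, hyx⟩
    · rcases h with h | ⟨h, _⟩
      · exact h1 (by linear_combination h)
      · have : x + 1 ∈ A.1 := by
          convert h using 1; ring
        exact hxp1A this
    · rcases h with h | ⟨h, _⟩
      · -- y + 1 = x + 1, so y = x, so y - 1 = x - 1 ∈ A, contradiction
        have hyx' : y = x := by exact add_right_cancel h
        rw [hyx'] at hy
        exact hxm1A hy
      · have : y ∈ A.1 := by
          convert h using 1; ring
        exact hSA (y - 1) hy (by rwa [sub_add_cancel])
  -- stability of D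
  have hDstable : Stable2 n Ds := by
    intro y hy h
    rw [hmemD] at hy h
    rcases hy with rfl | ⟨hy, hyx⟩
    · rcases h with h | ⟨h, hx'⟩
      · exact h1 (by linear_combination h)
      · exact hx' (by ring)
    · rcases h with h | ⟨h, _⟩
      · -- y + 1 = x - 1 means y = x - 2 ∈ A, contradiction
        have : y = x - 2 := by linear_combination h
        rw [this] at hy
        exact hx2 hy
      · exact hSA y hy h
  -- disjointness A C
  have hAC : Disjoint A.1 Cs := by
    rw [disjoint_left]
    intro y hyA hyC
    rw [hmemC] at hyC
    rcases hyC with rfl | ⟨hy, _⟩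
    · exact hxp1A hyA
    · exact hSA (y - 1) hy (by rwa [sub_add_cancel])
  -- disjointness C D
  have hCD : Disjoint Cs Ds := by
    rw [disjoint_left]
    intro y hyC hyD
    rw [hmemC] at hyC
    rw [hmemD] at hyD
    rcases hyC with rfl | ⟨hy, hyx⟩
    · rcases hyD with h | ⟨h, _⟩
      · exact h2 (by linear_combination h)
      · exact hxp1A h
    · rcases hyD with rfl | ⟨h, _⟩
      · have : x - 2 ∈ A.1 := by
          convert hy using 1; ring
        exact hx2 this
      · exact hSA (y - 1) hy (by rwa [sub_add_cancel])
  -- disjointness D B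
  have hDB : Disjoint Ds B.1 := by
    rw [disjoint_left]
    intro y hyD hyB
    rw [hmemD] at hyD
    rcases hyD with rfl | ⟨hy, hyx⟩
    · exact hxm1B hyB
    · have : y ∈ A.1 ∩ B.1 := mem_inter.mpr ⟨hy, hyB⟩
      rw [hcap, mem_singleton] at this
      exact hyx this
  refine ⟨⟨Cs, hCcard, hCstable⟩, ⟨Ds, hDcard, hDstable⟩, ⟨?_, hAC⟩, ⟨?_, hCD⟩, ⟨?_, hDB⟩⟩
  · intro h
    have h' : A.1 = Cs := congrArg Subtype.val h
    exact (disjoint_left.mp hAC hxA) (h' ▸ hxA)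
  · intro h
    have h' : Cs = Ds := congrArg Subtype.val h
    have hx1 : x + 1 ∈ Cs := by rw [hmemC]; left; rfl
    exact (disjoint_left.mp hCD hx1) (h' ▸ hx1)
  · intro h
    have h' : Ds = B.1 := congrArg Subtype.val h
    have hx1 : x - 1 ∈ Ds := by rw [hmemD]; left; rfl
    exact hxm1B (h' ▸ hx1)

lemma dist_two_or_three {V : Type*} (G : SimpleGraph V) (A B C D : V)
    (hne : A ≠ B) (hnadj : ¬ G.Adj A B)
    (h1 : G.Adj A C) (h2 : G.Adj C D) (h3 : G.Adj D B) :
    G.dist A B = 2 ∨ G.dist A B = 3 := by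
  have hle : G.dist A B ≤ 3 := by
    have := SimpleGraph.dist_le (SimpleGraph.Walk.cons h1 (SimpleGraph.Walk.cons h2 h3.toWalk))
    simpa using this
  have hreach : G.Reachable A B :=
    ⟨SimpleGraph.Walk.cons h1 (SimpleGraph.Walk.cons h2 h3.toWalk)⟩
  have h0 : 0 < G.dist A B := hreach.pos_dist_of_ne hne
  have hne1 : G.dist A B ≠ 1 := by
    intro h
    exact hnadj (SimpleGraph.dist_eq_one_iff_adj.mp h)
  omega

theorem stmt2 (n k : ℕ) (hn : 2 * k + 2 ≤ n) (A B : SGVert n k) (hne : A ≠ B)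
    (hcap : (A.1 ∩ B.1).card = 1) :
    (SG n k).dist A B = 2 ∨ (SG n k).dist A B = 3 := by
  obtain ⟨x, hx⟩ := Finset.card_eq_one.mp hcap
  have hxA : x ∈ A.1 := by
    have : x ∈ A.1 ∩ B.1 := by rw [hx]; exact mem_singleton_self x
    exact (mem_inter.mp this).1
  have hxB : x ∈ B.1 := by
    have : x ∈ A.1 ∩ B.1 := by rw [hx]; exact mem_singleton_self x
    exact (mem_inter.mp this).2
  have hk1 : 1 ≤ k := by
    rw [← A.2.1]; exact card_pos.mpr ⟨x, hxA⟩
  have hk2 : 2 ≤ k := by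
    by_contra h
    have hk : k = 1 := by omega
    apply hne
    have hA1 : A.1 = {x} := by
      apply Finset.eq_singleton_iff_unique_mem.mpr
      refine ⟨hxA, fun y hy => ?_⟩
      have := Finset.card_eq_one.mp (A.2.1.trans hk)
      obtain ⟨a, ha⟩ := this
      rw [ha, mem_singleton] at hy hxA
      rw [hy, hxA]
    have hB1 : B.1 = {x} := by
      apply Finset.eq_singleton_iff_unique_mem.mpr
      refine ⟨hxB, fun y hy => ?_⟩
      obtain ⟨a, ha⟩ := Finset.card_eq_one.mp (B.2.1.trans hk)
      rw [ha, mem_singleton] at hy hxB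
      rw [hy, hxB]
    exact Subtype.ext (hA1.trans hB1.symm)
  have hn6 : 6 ≤ n := by omega
  have hnadj : ¬ (SG n k).Adj A B := by
    rintro ⟨-, hd⟩
    rw [Finset.disjoint_iff_inter_eq_empty.mp hd] at hcap
    simp at hcap
  by_cases hx2 : x - 2 ∈ A.1
  · -- then x - 2 ∉ B, apply key_path with roles swapped
    have hx2B : x - 2 ∉ B.1 := by
      intro h
      have : x - 2 ∈ A.1 ∩ B.1 := mem_inter.mpr ⟨hx2, h⟩
      rw [hx, mem_singleton] at this
      exact zmod_two_ne_zero hn6 (by linear_combination - this)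
    obtain ⟨C, D, h1, h2, h3⟩ := key_path hn6 B A x hxB hxA (by rw [inter_comm]; exact hx) hx2B
    rw [SimpleGraph.dist_comm]
    exact dist_two_or_three _ B A C D hne.symm (fun h => hnadj h.symm) h1 h2 h3
  · obtain ⟨C, D, h1, h2, h3⟩ := key_path hn6 A B x hxA hxB hx hx2
    exact dist_two_or_three _ A B C D hne hnadj h1 h2 h3
end

section
/- Let A, B be vertices of SG(n,k) with A ∩ B ≠ ∅ and X = A ∪ B. If the number of connected components of the subgraph of C_n induced by {1,...,n} \ X is at least k, then dist(A,B) = 2. -/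
theorem stmt4 (n k : ℕ) (A B : SGVert n k) (hne : A ≠ B) (h : (A.1 ∩ B.1).Nonempty)
    (hcomp : k ≤ Nat.card
      ((CycleGraph n).induce ((↑(A.1 ∪ B.1) : Set (ZMod n))ᶜ)).ConnectedComponent) :
    (SG n k).dist A B = 2 := by
  classical
  -- dispose of k = 0
  rcases Nat.eq_zero_or_pos k with hk0 | hk
  · exfalso
    apply hne
    apply Subtype.ext
    rw [Finset.card_eq_zero.mp (A.2.1.trans hk0), Finset.card_eq_zero.mp (B.2.1.trans hk0)]
  -- A.1 is nonempty
  have hAne : A.1.Nonempty := Finset.card_pos.mp (by rw [A.2.1]; exact hk)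
  have hBne : B.1.Nonempty := Finset.card_pos.mp (by rw [B.2.1]; exact hk)
  -- 1 ≠ 0 in ZMod n (else A would not be 2-stable)
  have hone : (1 : ZMod n) ≠ 0 := by
    intro h10
    obtain ⟨a, ha⟩ := hAne
    exact A.2.2 a ha (by rw [h10, add_zero]; exact ha)
  set X : Set (ZMod n) := (↑(A.1 ∪ B.1) : Set (ZMod n)) with hX
  set G' := (CycleGraph n).induce Xᶜ with hG'
  -- the component type is finite and has at least k elements
  have hfin : Finite G'.ConnectedComponent := by
    by_contra hinf
    rw [not_finite_iff_infinite] at hinf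
    rw [Nat.card_eq_zero_of_infinite] at hcomp
    omega
  have := Fintype.ofFinite G'.ConnectedComponent
  rw [Nat.card_eq_fintype_card] at hcomp
  obtain ⟨t, -, ht⟩ := Finset.exists_subset_card_eq
    (show k ≤ (Finset.univ : Finset G'.ConnectedComponent).card by simpa using hcomp)
  -- pick a representative of each component
  have hrep : ∀ c : G'.ConnectedComponent, ∃ v : ↥Xᶜ, G'.connectedComponentMk v = c :=
    fun c => Quot.exists_rep c
  set f : G'.ConnectedComponent → ZMod n := fun c => ((hrep c).choose : ZMod n) with hf
  have hfmem : ∀ c, f c ∈ Xᶜ := fun c => ((hrep c).choose).2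
  have hfcomp : ∀ c, G'.connectedComponentMk ⟨f c, hfmem c⟩ = c := by
    intro c
    have := (hrep c).choose_spec
    convert this
  have hfinj : Function.Injective f := by
    intro c c' hcc
    rw [← hfcomp c, ← hfcomp c']
    exact congrArg _ (Subtype.ext hcc)
  set S : Finset (ZMod n) := t.image f with hS
  have hScard : S.card = k := by rw [hS, Finset.card_image_of_injective _ hfinj, ht]
  have hSmem : ∀ x ∈ S, x ∈ Xᶜ := by
    intro x hx
    obtain ⟨c, -, rfl⟩ := Finset.mem_image.mp hx
    exact hfmem c
  have hSstable : Stable2 n S := by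
    intro i hi hi1
    obtain ⟨c, hct, hci⟩ := Finset.mem_image.mp hi
    obtain ⟨c', hct', hci'⟩ := Finset.mem_image.mp hi1
    have hadj : G'.Adj ⟨f c, hfmem c⟩ ⟨f c', hfmem c'⟩ := by
      constructor
      · intro heq
        have h2 : f c = f c' := heq
        rw [hci, hci'] at h2
        exact hone (left_eq_add.mp h2)
      · left
        show f c + 1 = f c'
        rw [hci, hci']
    have : c = c' := by
      rw [← hfcomp c, ← hfcomp c']
      exact SimpleGraph.ConnectedComponent.sound hadj.reachable
    rw [this, hci'] at hci
    exact hone ((left_eq_add.mp hci.symm))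
  set C : SGVert n k := ⟨S, hScard, hSstable⟩ with hC
  have hSdisjA : Disjoint S A.1 := by
    rw [Finset.disjoint_left]
    intro x hx hxA
    exact hSmem x hx (by simp [hX, hxA])
  have hSdisjB : Disjoint S B.1 := by
    rw [Finset.disjoint_left]
    intro x hx hxB
    exact hSmem x hx (by simp [hX, hxB])
  have hCA : C ≠ A := by
    intro heq
    obtain ⟨a, ha⟩ := hAne
    have : a ∈ C.1 := by rw [heq]; exact ha
    exact Finset.disjoint_left.mp hSdisjA this ha
  have hCB : C ≠ B := by
    intro heq
    obtain ⟨b, hb⟩ := hBne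
    have : b ∈ C.1 := by rw [heq]; exact hb
    exact Finset.disjoint_left.mp hSdisjB this hb
  have hadjAC : (SG n k).Adj A C := ⟨Ne.symm hCA, hSdisjA.symm⟩
  have hadjCB : (SG n k).Adj C B := ⟨hCB, hSdisjB⟩
  -- the walk A - C - B has length 2
  have hle : (SG n k).dist A B ≤ 2 :=
    SimpleGraph.dist_le (SimpleGraph.Walk.cons hadjAC (SimpleGraph.Walk.cons hadjCB
      SimpleGraph.Walk.nil))
  have hreach : (SG n k).Reachable A B :=
    ⟨SimpleGraph.Walk.cons hadjAC (SimpleGraph.Walk.cons hadjCB SimpleGraph.Walk.nil)⟩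
  have hpos : 0 < (SG n k).dist A B := hreach.pos_dist_of_ne hne
  have hnotadj : ¬ (SG n k).Adj A B := by
    rintro ⟨-, hd⟩
    obtain ⟨x, hx⟩ := h
    rw [Finset.mem_inter] at hx
    exact Finset.disjoint_left.mp hd hx.1 hx.2
  have hne1 : (SG n k).dist A B ≠ 1 := by
    intro h1
    exact hnotadj (SimpleGraph.dist_eq_one_iff_adj.mp h1)
  omega
end

section
/- Let A, B be vertices of SG(n,k) with A ∩ B ≠ ∅, A ≠ B, and X = A ∪ B. If every connected component of the subgraph of C_n induced by X has at most 2 vertices, then dist(A,B) = 2. -/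
theorem stmt5 (n k : ℕ) (A B : SGVert n k) (hne : A ≠ B) (h : (A.1 ∩ B.1).Nonempty)
    (hcomp : ∀ C : ((CycleGraph n).induce (↑(A.1 ∪ B.1) : Set (ZMod n))).ConnectedComponent,
      Nat.card C.supp ≤ 2) :
    (SG n k).dist A B = 2 := by
  classical
  obtain ⟨hAcard, hAst⟩ := A.2
  obtain ⟨hBcard, hBst⟩ := B.2
  obtain ⟨z, hz⟩ := h
  rw [Finset.mem_inter] at hz
  -- rule out n = 1
  by_cases hn1 : n = 1
  · exfalso
    subst hn1
    apply hne
    apply Subtype.ext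
    ext x
    have hx1 : x = z := Subsingleton.elim x z
    subst hx1
    exact ⟨fun _ => hz.2, fun _ => hz.1⟩
  -- rule out n = 2
  by_cases hn2 : n = 2
  · exfalso
    subst hn2
    have hAB : A.1 ≠ B.1 := fun e => hne (Subtype.ext e)
    have : ∃ y, ¬ (y ∈ A.1 ↔ y ∈ B.1) := by
      by_contra hc
      push_neg at hc
      exact hAB (Finset.ext fun y => hc y)
    obtain ⟨y, hy⟩ := this
    have hyz : y ≠ z := by rintro rfl; exact hy ⟨fun _ => hz.2, fun _ => hz.1⟩
    have hstep : z + 1 = y := by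
      have : ∀ x y : ZMod 2, x ≠ y → x + 1 = y := by decide
      exact this z y (fun e => hyz e.symm)
    rcases Classical.em (y ∈ A.1) with hyA | hyA
    · exact hAst z hz.1 (hstep ▸ hyA)
    · have hyB : y ∈ B.1 := by tauto
      exact hBst z hz.2 (hstep ▸ hyB)
  have hone : (1 : ZMod n) ≠ 0 := by
    intro e
    exact hn1 (Nat.dvd_one.mp ((CharP.cast_eq_zero_iff (ZMod n) n 1).mp (by exact_mod_cast e)))
  have htwo : (2 : ZMod n) ≠ 0 := by
    intro e
    have hd := (CharP.cast_eq_zero_iff (ZMod n) n 2).mp (by exact_mod_cast e)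
    rcases (Nat.Prime.eq_one_or_self_of_dvd Nat.prime_two n hd) with h' | h'
    · exact hn1 h'
    · exact hn2 h'
  set X : Finset (ZMod n) := A.1 ∪ B.1 with hX
  have hfinX : Finite (↑(X : Set (ZMod n)) : Type) := X.finite_toSet.to_subtype
  -- the key consequence of the component bound
  have key : ∀ a : ZMod n, a ∈ X → a + 1 ∈ X → a + 2 ∉ X := by
    intro a ha ha1 ha2
    set G := (CycleGraph n).induce (↑X : Set (ZMod n)) with hG
    let v0 : (↑X : Set (ZMod n)) := ⟨a, ha⟩
    let v1 : (↑X : Set (ZMod n)) := ⟨a + 1, ha1⟩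
    let v2 : (↑X : Set (ZMod n)) := ⟨a + 2, ha2⟩
    have d01 : a ≠ a + 1 := fun e => hone (left_eq_add.mp e)
    have d02 : a ≠ a + 2 := fun e => htwo (left_eq_add.mp e)
    have d12 : a + 1 ≠ a + 2 := fun e => hone (by linear_combination -e)
    have adj01 : G.Adj v0 v1 := ⟨d01, Or.inl rfl⟩
    have adj12 : G.Adj v1 v2 := ⟨d12, Or.inl (show a + 1 + 1 = a + 2 by ring)⟩
    let C : G.ConnectedComponent := G.connectedComponentMk v1
    have m0 : v0 ∈ C.supp := by
      rw [SimpleGraph.ConnectedComponent.mem_supp_iff]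
      exact SimpleGraph.ConnectedComponent.sound adj01.reachable
    have m1 : v1 ∈ C.supp := by rw [SimpleGraph.ConnectedComponent.mem_supp_iff]
    have m2 : v2 ∈ C.supp := by
      rw [SimpleGraph.ConnectedComponent.mem_supp_iff]
      exact SimpleGraph.ConnectedComponent.sound adj12.reachable.symm
    have hsub : ({v0, v1, v2} : Set (↑X : Set (ZMod n))) ⊆ C.supp := by
      intro x hx
      rcases hx with rfl | rfl | rfl
      exacts [m0, m1, m2]
    have h3 : ({v0, v1, v2} : Set (↑X : Set (ZMod n))).ncard = 3 := by
      rw [Set.ncard_eq_three]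
      exact ⟨v0, v1, v2, by simpa [v0, v1, Subtype.ext_iff] using d01,
        by simpa [v0, v2, Subtype.ext_iff] using d02,
        by simpa [v1, v2, Subtype.ext_iff] using d12, rfl⟩
    have hle : 3 ≤ C.supp.ncard := h3 ▸ Set.ncard_le_ncard hsub C.supp.toFinite
    have := hcomp C
    rw [Nat.card_coe_set_eq] at this
    omega
  -- construct the common neighbour
  set f : ZMod n → ZMod n := fun a => if a + 1 ∈ X then a + 2 else a + 1 with hf
  have hAX : A.1 ⊆ X := Finset.subset_union_left
  have hBX : B.1 ⊆ X := Finset.subset_union_right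
  have hfnot : ∀ a ∈ X, f a ∉ X := by
    intro a ha
    by_cases h1 : a + 1 ∈ X
    · simpa [hf, h1] using key a ha h1
    · simpa [hf, h1] using h1
  have hinj : Set.InjOn f ↑A.1 := by
    intro a ha a' ha' he
    simp only [Finset.mem_coe] at ha ha'
    by_cases h1 : a + 1 ∈ X <;> by_cases h1' : a' + 1 ∈ X <;>
        simp only [hf, h1, h1', if_pos, if_neg, if_true, if_false, not_false_iff] at he <;>
      first
        | (first | linear_combination he | linear_combination -he)
        | (exfalso; exact hAst a ha (by
            rw [show a + 1 = a' by first | linear_combination he | linear_combination -he]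
            exact ha'))
        | (exfalso; exact hAst a' ha' (by
            rw [show a' + 1 = a by first | linear_combination he | linear_combination -he]
            exact ha))
  set Cs : Finset (ZMod n) := A.1.image f with hCs
  have hCcard : Cs.card = k := by rw [hCs, Finset.card_image_of_injOn hinj, hAcard]
  have hCst : Stable2 n Cs := by
    intro c hc hc1
    rw [hCs, Finset.mem_image] at hc hc1
    obtain ⟨a, ha, rfl⟩ := hc
    obtain ⟨a', ha', he⟩ := hc1
    by_cases h1 : a + 1 ∈ X <;> by_cases h1' : a' + 1 ∈ X <;>
        simp only [hf, h1, h1', if_pos, if_neg, if_true, if_false, not_false_iff] at he <;>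
      first
        | (exact hAst a ha (by
            rw [show a + 1 = a' by first | linear_combination he | linear_combination -he]
            exact ha'))
        | (exact hAst a' ha' (by
            rw [show a' + 1 = a by first | linear_combination he | linear_combination -he]
            exact ha))
        | (exact key a (hAX ha) h1 (by
            rw [show a + 2 = a' by first | linear_combination he | linear_combination -he]
            exact hAX ha'))
        | (exact key a' (hAX ha') h1' (by
            rw [show a' + 2 = a by first | linear_combination he | linear_combination -he]
            exact hAX ha))
        | (exact h1 (by
            rw [show a = a' by first | linear_combination he | linear_combination -he]
            exact h1'))
        | (exact h1' (by
            rw [show a' = a by first | linear_combination he | linear_combination -he]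
            exact h1))
  have hCdisj : Disjoint Cs X := by
    rw [Finset.disjoint_left]
    intro c hc
    rw [hCs, Finset.mem_image] at hc
    obtain ⟨a, ha, rfl⟩ := hc
    exact hfnot a (hAX ha)
  let V : SGVert n k := ⟨Cs, hCcard, hCst⟩
  have hk : 0 < k := by
    rw [← hAcard]
    exact Finset.card_pos.mpr ⟨z, hz.1⟩
  have hdisjA : Disjoint Cs A.1 := hCdisj.mono_right hAX
  have hdisjB : Disjoint Cs B.1 := hCdisj.mono_right hBX
  have hVA : V ≠ A := by
    intro e
    have hca : Cs = A.1 := congrArg Subtype.val e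
    have hd : Disjoint A.1 A.1 := hca ▸ hdisjA
    have he : A.1 = ∅ := by simpa using disjoint_self.mp hd
    rw [he] at hAcard
    simp at hAcard
    omega
  have hVB : V ≠ B := by
    intro e
    have hca : Cs = B.1 := congrArg Subtype.val e
    have hd : Disjoint B.1 B.1 := hca ▸ hdisjB
    have he : B.1 = ∅ := by simpa using disjoint_self.mp hd
    rw [he] at hBcard
    simp at hBcard
    omega
  have adjAV : (SG n k).Adj A V := ⟨hVA.symm, hdisjA.symm⟩
  have adjVB : (SG n k).Adj V B := ⟨hVB, hdisjB⟩
  let w : (SG n k).Walk A B := SimpleGraph.Walk.cons adjAV (SimpleGraph.Walk.cons adjVB SimpleGraph.Walk.nil)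
  have hd2 : (SG n k).dist A B ≤ 2 := by
    have := SimpleGraph.dist_le w
    simpa [w] using this
  have hnadj : ¬ (SG n k).Adj A B := by
    rintro ⟨-, hdis⟩
    exact Finset.disjoint_left.mp hdis hz.1 hz.2
  have hd1 : (SG n k).dist A B ≠ 1 := fun e => hnadj (SimpleGraph.dist_eq_one_iff_adj.mp e)
  have hd0 : (SG n k).dist A B ≠ 0 := by
    intro e
    rcases SimpleGraph.dist_eq_zero_iff_eq_or_not_reachable.mp e with rfl | hr
    · exact hne rfl
    · exact hr w.reachable
  omega
end

section
/- Let k ≥ 3 and 2k+2 ≤ n ≤ 4k−3. Then in SG(n,k) the vertices A = {1,4,6,8,...,2k} and B = {1,5,7,9,...,2k+1} are at distance exactly 3. -/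
section Aux
variable {n : ℕ}

lemma cast_inj_of_lt [NeZero n] {a b : ℕ} (ha : a < n) (hb : b < n)
    (h : (a : ZMod n) = b) : a = b := by
  have := congrArg ZMod.val h
  rwa [ZMod.val_cast_of_lt ha, ZMod.val_cast_of_lt hb] at this

lemma card_image_cast [NeZero n] (s : Finset ℕ) (hs : ∀ a ∈ s, a < n) :
    (s.image (fun x : ℕ => (x : ZMod n))).card = s.card :=
  Finset.card_image_of_injOn (fun a ha b hb h => cast_inj_of_lt (hs a ha) (hs b hb) h)

lemma stable_image [NeZero n] (s : Finset ℕ) (hs : ∀ a ∈ s, a + 1 ≤ n) (h0 : 0 ∉ s)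
    (h : ∀ a ∈ s, a + 1 ∉ s) : Stable2 n (s.image (fun x : ℕ => (x : ZMod n))) := by
  intro i hi hi1
  simp only [Finset.mem_image] at hi hi1
  obtain ⟨a, ha, rfl⟩ := hi
  obtain ⟨b, hb, hba⟩ := hi1
  have hbn : b < n := by have := hs b hb; have := hs a ha; omega
  have hab : ((a + 1 : ℕ) : ZMod n) = (b : ℕ) := by push_cast; rw [hba]
  rcases Nat.lt_or_ge (a+1) n with hlt | hge
  · exact h a ha ((cast_inj_of_lt hlt hbn hab) ▸ hb)
  · have han : a + 1 = n := le_antisymm (hs a ha) hge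
    rw [han] at hab
    simp only [ZMod.natCast_self] at hab
    have hb0 : ((0:ℕ) : ZMod n) = (b : ZMod n) := by push_cast; exact hab
    have : (0:ℕ) = b := cast_inj_of_lt (by omega) hbn hb0
    exact h0 (this ▸ hb)

lemma disj_image [NeZero n] (s t : Finset ℕ) (hs : ∀ a ∈ s, a < n) (ht : ∀ a ∈ t, a < n)
    (h : ∀ a ∈ s, a ∉ t) :
    Disjoint (s.image (fun x : ℕ => (x : ZMod n))) (t.image (fun x : ℕ => (x : ZMod n))) := by
  rw [Finset.disjoint_left]
  rintro x hx hx'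
  simp only [Finset.mem_image] at hx hx'
  obtain ⟨a, ha, rfl⟩ := hx
  obtain ⟨b, hb, hba⟩ := hx'
  exact h a ha ((cast_inj_of_lt (ht b hb) (hs a ha) hba) ▸ hb)

lemma no_big_stable (n k x : ℕ) [NeZero n] (hk : 3 ≤ k) (h1 : 2*k+2 ≤ n) (h2 : n ≤ 4*k-3)
    (S : Finset (ZMod n)) (hcard : k ≤ S.card) (hst : Stable2 n S)
    (hmem : ∀ c ∈ S, c.val = 0 ∨ c.val = x ∨ (2*k+2 ≤ c.val ∧ c.val < n)) : False := by
  classical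
  set N : Finset ℕ := insert 0 (insert 1 (insert x (insert (x+1) (Finset.Ico (2*k+2) n)))) with hN
  set U : Finset (ZMod n) := N.image (fun m : ℕ => (m : ZMod n)) with hU
  have hone : (1 : ZMod n) ≠ 0 := by
    intro h
    have : ((1:ℕ) : ZMod n) = ((0:ℕ) : ZMod n) := by simpa using h
    have := cast_inj_of_lt (show 1 < n by omega) (show 0 < n by omega) this
    omega
  have hdisj : ∀ a ∈ S, ∀ b ∈ S, a ≠ b →
      Disjoint ({a, a+1} : Finset (ZMod n)) ({b, b+1} : Finset (ZMod n)) := by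
    intro a ha b hb hab
    rw [Finset.disjoint_left]
    intro c hc hc'
    simp only [Finset.mem_insert, Finset.mem_singleton] at hc hc'
    rcases hc with rfl | rfl <;> rcases hc' with h | h
    · exact hab h
    · exact hst b hb (h ▸ ha)
    · exact hst a ha (h ▸ hb)
    · exact hab (by exact add_right_cancel h)
  have hcardB : (S.biUnion (fun c => ({c, c+1} : Finset (ZMod n)))).card = 2 * S.card := by
    rw [Finset.card_biUnion hdisj]
    rw [Finset.sum_congr rfl (fun c _ => Finset.card_pair (by
      intro h; exact hone (left_eq_add.mp h)))]
    · rw [Finset.sum_const, smul_eq_mul, mul_comm]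
  have hvc : ∀ c : ZMod n, ((c.val : ℕ) : ZMod n) = c := fun c => by
    rw [ZMod.natCast_val, ZMod.cast_id]
  have hCU : ∀ c ∈ S, c ∈ U ∧ c + 1 ∈ U := by
    intro c hcS
    constructor
    · refine Finset.mem_image.mpr ⟨c.val, ?_, hvc c⟩
      rcases hmem c hcS with h0 | hx' | ⟨hl, hr⟩
      · simp [hN, h0]
      · simp [hN, hx']
      · simp only [hN, Finset.mem_insert, Finset.mem_Ico]
        right; right; right; right; exact ⟨hl, hr⟩
    · have hc1 : c + 1 = ((c.val + 1 : ℕ) : ZMod n) := by push_cast; rw [hvc c]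
      rcases hmem c hcS with h0 | hx' | ⟨hl, hr⟩
      · refine Finset.mem_image.mpr ⟨c.val + 1, ?_, hc1.symm⟩
        simp [hN, h0]
      · refine Finset.mem_image.mpr ⟨c.val + 1, ?_, hc1.symm⟩
        simp [hN, hx']
      · rcases Nat.lt_or_ge (c.val + 1) n with hlt | hge
        · refine Finset.mem_image.mpr ⟨c.val + 1, ?_, hc1.symm⟩
          simp only [hN, Finset.mem_insert, Finset.mem_Ico]
          right; right; right; right; exact ⟨by omega, hlt⟩
        · have hn1 : c.val + 1 = n := by omega
          refine Finset.mem_image.mpr ⟨0, by simp [hN], ?_⟩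
          rw [hc1, hn1]
          simp
  have hsub : S.biUnion (fun c => ({c, c+1} : Finset (ZMod n))) ⊆ U := by
    intro y hy
    simp only [Finset.mem_biUnion, Finset.mem_insert, Finset.mem_singleton] at hy
    obtain ⟨c, hcS, h | h⟩ := hy
    · exact h ▸ (hCU c hcS).1
    · exact h ▸ (hCU c hcS).2
  have hUcard : U.card ≤ 4 + (n - (2*k+2)) := by
    have hI : (Finset.Ico (2*k+2) n).card = n - (2*k+2) := Nat.card_Ico _ _
    calc U.card ≤ N.card := Finset.card_image_le
    _ ≤ (insert 1 (insert x (insert (x+1) (Finset.Ico (2*k+2) n)))).card + 1 :=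
        Finset.card_insert_le _ _
    _ ≤ (insert x (insert (x+1) (Finset.Ico (2*k+2) n))).card + 1 + 1 :=
        Nat.add_le_add_right (Finset.card_insert_le _ _) 1
    _ ≤ (insert (x+1) (Finset.Ico (2*k+2) n)).card + 1 + 1 + 1 :=
        Nat.add_le_add_right (Nat.add_le_add_right (Finset.card_insert_le _ _) 1) 1
    _ ≤ (Finset.Ico (2*k+2) n).card + 1 + 1 + 1 + 1 :=
        Nat.add_le_add_right (Nat.add_le_add_right (Nat.add_le_add_right
          (Finset.card_insert_le _ _) 1) 1) 1
    _ ≤ 4 + (n - (2*k+2)) := by omega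
  have := Finset.card_le_card hsub
  rw [hcardB] at this
  omega
end Aux


lemma sg_adj {n k : ℕ} (hk : k ≠ 0) (X Y : SGVert n k) (h : Disjoint X.1 Y.1) :
    (SG n k).Adj X Y := by
  refine ⟨fun e => hk ?_, h⟩
  have hXY : X.1 = Y.1 := congrArg Subtype.val e
  rw [hXY, disjoint_self] at h
  rw [← Y.2.1, h]
  simp

lemma walk_len2 {V : Type*} {G : SimpleGraph V} {u v : V} (p : G.Walk u v)
    (h : p.length = 2) : ∃ w, G.Adj u w ∧ G.Adj w v := by
  cases p with
  | nil => simp at h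
  | cons h' q => exact ⟨_, h', q.adj_of_length_eq_one (by simpa using h)⟩

theorem stmt9 (n k : ℕ) (hk : 3 ≤ k) (h1 : 2 * k + 2 ≤ n) (h2 : n ≤ 4 * k - 3)
    (hA : ((insert 1 ((Finset.range (k - 1)).image fun i => 4 + 2 * i)).image
        (fun x : ℕ => (x : ZMod n))).card = k ∧
      Stable2 n ((insert 1 ((Finset.range (k - 1)).image fun i => 4 + 2 * i)).image
        (fun x : ℕ => (x : ZMod n))))
    (hB : ((insert 1 ((Finset.range (k - 1)).image fun i => 5 + 2 * i)).image
        (fun x : ℕ => (x : ZMod n))).card = k ∧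
      Stable2 n ((insert 1 ((Finset.range (k - 1)).image fun i => 5 + 2 * i)).image
        (fun x : ℕ => (x : ZMod n)))) :
    (SG n k).dist ⟨_, hA⟩ ⟨_, hB⟩ = 3 := by
  classical
  haveI : NeZero n := ⟨by omega⟩
  set ANat : Finset ℕ := insert 1 ((Finset.range (k - 1)).image fun i => 4 + 2 * i) with hANat
  set BNat : Finset ℕ := insert 1 ((Finset.range (k - 1)).image fun i => 5 + 2 * i) with hBNat
  set CNat : Finset ℕ := (Finset.range k).image fun i => 3 + 2 * i with hCNat
  set DNat : Finset ℕ := (Finset.range k).image fun i => 2 + 2 * i with hDNat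
  -- membership characterizations
  have hmA : ∀ a : ℕ, a ∈ ANat ↔ a = 1 ∨ ∃ i, i < k - 1 ∧ 4 + 2 * i = a := by
    intro a; simp [hANat, Finset.mem_insert, Finset.mem_image, Finset.mem_range]
  have hmB : ∀ a : ℕ, a ∈ BNat ↔ a = 1 ∨ ∃ i, i < k - 1 ∧ 5 + 2 * i = a := by
    intro a; simp [hBNat, Finset.mem_insert, Finset.mem_image, Finset.mem_range]
  have hmC : ∀ a : ℕ, a ∈ CNat ↔ ∃ i, i < k ∧ 3 + 2 * i = a := by
    intro a; simp [hCNat, Finset.mem_image, Finset.mem_range]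
  have hmD : ∀ a : ℕ, a ∈ DNat ↔ ∃ i, i < k ∧ 2 + 2 * i = a := by
    intro a; simp [hDNat, Finset.mem_image, Finset.mem_range]
  -- bounds
  have hbA : ∀ a ∈ ANat, a < n := by
    intro a ha; rcases (hmA a).mp ha with rfl | ⟨i, hi, rfl⟩ <;> omega
  have hbB : ∀ a ∈ BNat, a < n := by
    intro a ha; rcases (hmB a).mp ha with rfl | ⟨i, hi, rfl⟩ <;> omega
  have hbC : ∀ a ∈ CNat, a < n := by
    intro a ha; rcases (hmC a).mp ha with ⟨i, hi, rfl⟩; omega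
  have hbD : ∀ a ∈ DNat, a < n := by
    intro a ha; rcases (hmD a).mp ha with ⟨i, hi, rfl⟩; omega
  -- C and D are valid vertices
  have hC : (CNat.image (fun x : ℕ => (x : ZMod n))).card = k ∧
      Stable2 n (CNat.image (fun x : ℕ => (x : ZMod n))) := by
    constructor
    · rw [card_image_cast _ hbC, hCNat,
        Finset.card_image_of_injOn (fun a _ b _ h => by omega), Finset.card_range]
    · refine stable_image _ (fun a ha => ?_) (fun h0 => ?_) (fun a ha ha1 => ?_)
      · rcases (hmC a).mp ha with ⟨i, hi, rfl⟩; omega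
      · rcases (hmC 0).mp h0 with ⟨i, hi, hie⟩; omega
      · rcases (hmC a).mp ha with ⟨i, hi, rfl⟩
        rcases (hmC _).mp ha1 with ⟨j, hj, hje⟩; omega
  have hD : (DNat.image (fun x : ℕ => (x : ZMod n))).card = k ∧
      Stable2 n (DNat.image (fun x : ℕ => (x : ZMod n))) := by
    constructor
    · rw [card_image_cast _ hbD, hDNat,
        Finset.card_image_of_injOn (fun a _ b _ h => by omega), Finset.card_range]
    · refine stable_image _ (fun a ha => ?_) (fun h0 => ?_) (fun a ha ha1 => ?_)
      · rcases (hmD a).mp ha with ⟨i, hi, rfl⟩; omega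
      · rcases (hmD 0).mp h0 with ⟨i, hi, hie⟩; omega
      · rcases (hmD a).mp ha with ⟨i, hi, rfl⟩
        rcases (hmD _).mp ha1 with ⟨j, hj, hje⟩; omega
  set vA : SGVert n k := ⟨_, hA⟩ with hvA
  set vB : SGVert n k := ⟨_, hB⟩ with hvB
  set vC : SGVert n k := ⟨_, hC⟩ with hvC
  set vD : SGVert n k := ⟨_, hD⟩ with hvD
  -- adjacencies
  have hAC : (SG n k).Adj vA vC := by
    refine sg_adj (by omega) _ _ (disj_image _ _ hbA hbC ?_)
    intro a ha hc
    rcases (hmC a).mp hc with ⟨j, hj, hje⟩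
    rcases (hmA a).mp ha with rfl | ⟨i, hi, hie⟩ <;> omega
  have hCD : (SG n k).Adj vC vD := by
    refine sg_adj (by omega) _ _ (disj_image _ _ hbC hbD ?_)
    intro a ha hc
    rcases (hmD a).mp hc with ⟨j, hj, hje⟩
    rcases (hmC a).mp ha with ⟨i, hi, hie⟩; omega
  have hDB : (SG n k).Adj vD vB := by
    refine sg_adj (by omega) _ _ (disj_image _ _ hbD hbB ?_)
    intro a ha hc
    rcases (hmD a).mp ha with ⟨i, hi, hie⟩
    rcases (hmB a).mp hc with rfl | ⟨j, hj, hje⟩ <;> omega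
  -- the walk of length 3
  have w3 : (SG n k).Walk vA vB :=
    SimpleGraph.Walk.cons hAC (SimpleGraph.Walk.cons hCD (SimpleGraph.Walk.cons hDB
      SimpleGraph.Walk.nil))
  have hub : (SG n k).dist vA vB ≤ 3 := by
    simpa using SimpleGraph.dist_le (SimpleGraph.Walk.cons hAC
      (SimpleGraph.Walk.cons hCD (SimpleGraph.Walk.cons hDB SimpleGraph.Walk.nil)))
  -- A ≠ B
  have hne : vA ≠ vB := by
    intro e
    have hE : ANat.image (fun x : ℕ => (x : ZMod n)) = BNat.image (fun x : ℕ => (x : ZMod n)) :=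
      congrArg Subtype.val e
    have h4 : ((4:ℕ) : ZMod n) ∈ ANat.image (fun x : ℕ => (x : ZMod n)) :=
      Finset.mem_image.mpr ⟨4, (hmA 4).mpr (Or.inr ⟨0, by omega, by omega⟩), rfl⟩
    rw [hE] at h4
    obtain ⟨b, hb, hbe⟩ := Finset.mem_image.mp h4
    have hb4 : b = 4 := cast_inj_of_lt (hbB b hb) (by omega) hbe
    rcases (hmB b).mp hb with h | ⟨j, hj, hje⟩ <;> omega
  -- not adjacent
  have hnadj : ¬ (SG n k).Adj vA vB := by
    rintro ⟨-, hd⟩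
    have h1A : ((1:ℕ) : ZMod n) ∈ ANat.image (fun x : ℕ => (x : ZMod n)) :=
      Finset.mem_image.mpr ⟨1, (hmA 1).mpr (Or.inl rfl), rfl⟩
    have h1B : ((1:ℕ) : ZMod n) ∈ BNat.image (fun x : ℕ => (x : ZMod n)) :=
      Finset.mem_image.mpr ⟨1, (hmB 1).mpr (Or.inl rfl), rfl⟩
    exact Finset.disjoint_left.mp hd h1A h1B
  -- lower bound
  have hlb : 3 ≤ (SG n k).dist vA vB := by
    by_contra hcon
    push_neg at hcon
    have hd0 : (SG n k).dist vA vB ≠ 0 := by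
      rw [SimpleGraph.dist_ne_zero_iff_ne_and_reachable]
      exact ⟨hne, ⟨w3⟩⟩
    have hd1 : (SG n k).dist vA vB ≠ 1 := fun h =>
      hnadj (SimpleGraph.dist_eq_one_iff_adj.mp h)
    have hd2 : (SG n k).dist vA vB = 2 := by omega
    obtain ⟨p, hp⟩ := SimpleGraph.Reachable.exists_walk_length_eq_dist
      (⟨w3⟩ : (SG n k).Reachable vA vB)
    obtain ⟨wm, hAw, hwB⟩ := walk_len2 p (hp.trans hd2)
    have hdAS : Disjoint (ANat.image (fun x : ℕ => (x : ZMod n))) wm.1 := hAw.2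
    have hdSB : Disjoint wm.1 (BNat.image (fun x : ℕ => (x : ZMod n))) := hwB.2
    have hvcast : ∀ c : ZMod n, ((c.val : ℕ) : ZMod n) = c := fun c => by
      rw [ZMod.natCast_val, ZMod.cast_id]
    have hval : ∀ c ∈ wm.1, c.val = 0 ∨ c.val = 2 ∨ c.val = 3 ∨
        (2*k+2 ≤ c.val ∧ c.val < n) := by
      intro c hc
      have hvlt := ZMod.val_lt c
      by_contra hcon2
      push_neg at hcon2
      have hrange : c.val = 1 ∨ (4 ≤ c.val ∧ c.val ≤ 2*k+1) := by omega
      rcases hrange with h1' | ⟨hge4, hle⟩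
      · have : c ∈ ANat.image (fun x : ℕ => (x : ZMod n)) :=
          Finset.mem_image.mpr ⟨c.val, (hmA c.val).mpr (Or.inl h1'), hvcast c⟩
        exact Finset.disjoint_left.mp hdAS this hc
      · rcases Nat.even_or_odd c.val with ⟨m, hm⟩ | ⟨m, hm⟩
        · have : c ∈ ANat.image (fun x : ℕ => (x : ZMod n)) :=
            Finset.mem_image.mpr ⟨c.val, (hmA c.val).mpr
              (Or.inr ⟨m - 2, by omega, by omega⟩), hvcast c⟩
          exact Finset.disjoint_left.mp hdAS this hc
        · have : c ∈ BNat.image (fun x : ℕ => (x : ZMod n)) :=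
            Finset.mem_image.mpr ⟨c.val, (hmB c.val).mpr
              (Or.inr ⟨m - 2, by omega, by omega⟩), hvcast c⟩
          exact Finset.disjoint_left.mp hdSB hc this
    by_cases h3 : ((3:ℕ) : ZMod n) ∈ wm.1
    · have h2' : ((2:ℕ) : ZMod n) ∉ wm.1 := by
        intro h2m
        refine wm.2.2 _ h2m ?_
        have he : ((2:ℕ) : ZMod n) + 1 = ((3:ℕ) : ZMod n) := by push_cast; ring
        rw [he]; exact h3
      refine no_big_stable n k 3 hk h1 h2 wm.1 (le_of_eq wm.2.1.symm) wm.2.2 ?_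
      intro c hc
      rcases hval c hc with h0 | hx2 | hx3 | hint
      · exact Or.inl h0
      · exfalso
        apply h2'
        have : ((2:ℕ) : ZMod n) = c := by rw [← hx2, hvcast c]
        rw [this]; exact hc
      · exact Or.inr (Or.inl hx3)
      · exact Or.inr (Or.inr hint)
    · refine no_big_stable n k 2 hk h1 h2 wm.1 (le_of_eq wm.2.1.symm) wm.2.2 ?_
      intro c hc
      rcases hval c hc with h0 | hx2 | hx3 | hint
      · exact Or.inl h0
      · exact Or.inr (Or.inl hx2)
      · exfalso
        apply h3
        have : ((3:ℕ) : ZMod n) = c := by rw [← hx3, hvcast c]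
        rw [this]; exact hc
      · exact Or.inr (Or.inr hint)
  exact le_antisymm hub hlb
end

section
/- Let A, B be distinct vertices of SG(n,k) with A ∩ B ≠ ∅ and X = A ∪ B. Then the number of connected components C of the subgraph of C_n induced by X satisfying |C ∩ (A\B)| ≥ 1 and |C ∩ (B\A)| = 0 ('A-components', where intersection is taken with the endpoints of C) equals the number of components with |C ∩ (B\A)| ≥ 1 and |C ∩ (A\B)| = 0 when intersections are restricted to end-vertices of the components. -/
namespace Stmt10
open SimpleGraph Finset

variable {n : ℕ}

abbrev IG (X : Finset (ZMod n)) : SimpleGraph ↥(↑X : Set (ZMod n)) :=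
  (CycleGraph n).induce (↑X : Set (ZMod n))

lemma adj_iff {X : Finset (ZMod n)} {a b : ZMod n} (ha : a ∈ X) (hb : b ∈ X) :
    (IG X).Adj ⟨a, ha⟩ ⟨b, hb⟩ ↔ a ≠ b ∧ (a + 1 = b ∨ b + 1 = a) := Iff.rfl

lemma adj_add_e {X : Finset (ZMod n)} {a : ZMod n} {e : ZMod n} (he : e = 1 ∨ e = -1)
    (he0 : e ≠ 0) (ha : a ∈ X) (hae : a + e ∈ X) :
    (IG X).Adj ⟨a, ha⟩ ⟨a + e, hae⟩ := by
  rw [adj_iff]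
  refine ⟨fun hc => he0 (by linear_combination -hc), ?_⟩
  rcases he with rfl | rfl
  · exact Or.inl rfl
  · right; ring

lemma exists_end (X : Finset (ZMod n)) (hn1 : (1 : ZMod n) ≠ 0)
    {e : ZMod n} (he : e = 1 ∨ e = -1) {x0 : ZMod n} (hx0 : x0 ∉ X)
    {v : ZMod n} (hv : v ∈ X) :
    ∃ p, ∃ hp : p ∈ X, p + e ∉ X ∧
      (IG X).Reachable ⟨v, hv⟩ ⟨p, hp⟩ ∧
      ∀ ℓ (hℓ : ℓ ∈ X), (IG X).Reachable ⟨p, hp⟩ ⟨ℓ, hℓ⟩ → ℓ + e ∉ X → ℓ = p := by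
  have he0 : e ≠ 0 := by rcases he with rfl | rfl; exacts [hn1, neg_ne_zero.mpr hn1]
  have he2 : e * e = 1 := by rcases he with rfl | rfl <;> ring
  -- existence of an index where the ray leaves X
  have hex : ∃ i : ℕ, v + ((i + 1 : ℕ) : ZMod n) * e ∉ X := by
    by_cases hn0 : n = 0
    · subst hn0
      by_contra hc
      push_neg at hc
      have hinj : Function.Injective (fun i : ℕ => v + ((i + 1 : ℕ) : ZMod 0) * e) := by
        intro i j hij
        simp only at hij
        have h2 : ((i + 1 : ℕ) : ZMod 0) * e * e = ((j + 1 : ℕ) : ZMod 0) * e * e := by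
          have := add_left_cancel hij
          rw [this]
        rw [mul_assoc, mul_assoc, he2, mul_one, mul_one] at h2
        have h3 : i + 1 = j + 1 := by exact_mod_cast h2
        omega
      exact (Set.infinite_of_injective_forall_mem hinj (fun i => hc i)) X.finite_toSet
    · haveI : NeZero n := ⟨hn0⟩
      refine ⟨(e * (x0 - v) - 1).val, ?_⟩
      have hcast : (((e * (x0 - v) - 1).val : ℕ) : ZMod n) = e * (x0 - v) - 1 :=
        ZMod.natCast_rightInverse _
      have : v + (((e * (x0 - v) - 1).val + 1 : ℕ) : ZMod n) * e = x0 := by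
        push_cast
        rw [hcast]
        linear_combination (x0 - v) * he2
      rw [this]; exact hx0
  classical
  set m := Nat.find hex with hm
  have hend : v + ((m + 1 : ℕ) : ZMod n) * e ∉ X := Nat.find_spec hex
  have hchain : ∀ i ≤ m, v + (i : ℕ) * e ∈ X := by
    intro i hi
    induction i with
    | zero => simpa using hv
    | succ j ih =>
      have hj : j < m := hi
      have := Nat.find_min hex hj
      simpa using this
  refine ⟨v + (m : ℕ) * e, hchain m le_rfl, ?_, ?_, ?_⟩
  · intro hc
    apply hend
    have : v + ((m + 1 : ℕ) : ZMod n) * e = v + (m : ℕ) * e + e := by push_cast; ring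
    rw [this]; exact hc
  · -- reachability along the chain
    have : ∀ i ≤ m, ∀ h' : v + (i : ℕ) * e ∈ X, (IG X).Reachable ⟨v, hv⟩ ⟨v + (i : ℕ) * e, h'⟩ := by
      intro i hi
      induction i with
      | zero =>
        intro h'
        have hvv : v + ((0 : ℕ) : ZMod n) * e = v := by push_cast; ring
        exact SimpleGraph.Reachable.refl _ |>.trans (by rw [show (⟨v + ((0:ℕ):ZMod n)*e, h'⟩ : ↥(↑X : Set (ZMod n))) = ⟨v, hv⟩ from Subtype.ext hvv])
      | succ j ih =>
        intro h'
        have hj : j ≤ m := Nat.le_of_succ_le hi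
        have hjX := hchain j hj
        have harr : v + ((j + 1 : ℕ) : ZMod n) * e = (v + (j : ℕ) * e) + e := by push_cast; ring
        have hadj : (IG X).Adj ⟨v + (j : ℕ) * e, hjX⟩ ⟨v + ((j+1:ℕ):ZMod n) * e, h'⟩ := by
          have h'' : (v + (j : ℕ) * e) + e ∈ X := by rw [← harr]; exact h'
          have := adj_add_e he he0 hjX h''
          convert this using 2
        exact (ih hj hjX).trans hadj.reachable
    exact this m le_rfl _
  · -- uniqueness
    intro ℓ hℓ hreach hℓe
    set p := v + (m : ℕ) * e with hpdef
    have hpe : p + e ∉ X := by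
      intro hc
      apply hend
      have : v + ((m + 1 : ℕ) : ZMod n) * e = p + e := by rw [hpdef]; push_cast; ring
      rw [this]; exact hc
    -- invariant predicate
    set Pred : ZMod n → Prop := fun y => ∃ i : ℕ, y = p - (i : ℕ) * e ∧ ∀ j ≤ i, p - (j : ℕ) * e ∈ X with hPred
    have hinv : ∀ y z : ↥(↑X : Set (ZMod n)), (IG X).Adj y z → Pred ↑y → Pred ↑z := by
      rintro ⟨y, hy⟩ ⟨z, hz⟩ hadj ⟨i, hyi0, hall⟩
      have hyi : y = p - (i : ℕ) * e := hyi0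
      rw [adj_iff] at hadj
      obtain ⟨hne', hor⟩ := hadj
      have hor' : z = y + e ∨ z = y - e := by
        rcases he with rfl | rfl
        · rcases hor with h1 | h1
          · exact Or.inl h1.symm
          · exact Or.inr (eq_sub_of_add_eq h1)
        · rcases hor with h1 | h1
          · right; rw [sub_neg_eq_add]; exact h1.symm
          · left; rw [← h1]; ring
      rcases hor' with rfl | rfl
      · -- moving towards p
        match i, hyi, hall with
        | 0, hyi, hall =>
          exfalso
          apply hpe
          have h3 : y + e = p + e := by rw [hyi]; push_cast; ring
          rw [h3] at hz
          exact hz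
        | (i' + 1), hyi, hall =>
          refine ⟨i', ?_, fun j hj => hall j (le_trans hj (Nat.le_succ _))⟩
          show y + e = p - (i' : ℕ) * e
          rw [hyi]; push_cast; ring
      · -- moving away from p
        refine ⟨i + 1, ?_, ?_⟩
        · show y - e = p - ((i + 1 : ℕ) : ZMod n) * e
          rw [hyi]; push_cast; ring
        · intro j hj
          rcases Nat.lt_or_ge j (i + 1) with hlt | hge
          · exact hall j (Nat.lt_succ_iff.mp hlt)
          · have : j = i + 1 := le_antisymm hj hge
            subst this
            have : p - ((i + 1 : ℕ) : ZMod n) * e = y - e := by rw [hyi]; push_cast; ring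
            rw [this]; exact hz
    have hwalk : ∀ (y z : ↥(↑X : Set (ZMod n))), (IG X).Reachable y z → Pred ↑y → Pred ↑z := by
      intro y z hr
      obtain ⟨wk⟩ := hr
      induction wk with
      | nil => exact fun h => h
      | cons hadj q ih => exact fun hy => ih (hinv _ _ hadj hy)
    have hPp : Pred p := ⟨0, by push_cast; ring, fun j hj => by
      interval_cases j
      · simpa using hchain m le_rfl⟩
    obtain ⟨i, hℓi0, hall⟩ := hwalk _ _ hreach hPp
    have hℓi : ℓ = p - (i : ℕ) * e := hℓi0
    match i, hℓi, hall with
    | 0, hℓi, hall => rw [hℓi]; push_cast; ring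
    | (i' + 1), hℓi, hall =>
      exfalso
      apply hℓe
      have h4 : ℓ + e = p - (i' : ℕ) * e := by rw [hℓi]; push_cast; ring
      rw [h4]
      exact hall i' (Nat.le_succ _)


lemma ends (X : Finset (ZMod n)) (hn1 : (1 : ZMod n) ≠ 0) {x0 : ZMod n} (hx0 : x0 ∉ X)
    (C : (IG X).ConnectedComponent) :
    ∃ p q : ZMod n, ∃ (hp : p ∈ X) (hq : q ∈ X),
      (IG X).connectedComponentMk ⟨p, hp⟩ = C ∧ (IG X).connectedComponentMk ⟨q, hq⟩ = C ∧
      p + 1 ∉ X ∧ q - 1 ∉ X ∧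
      (∀ ℓ (hℓ : ℓ ∈ X), (IG X).connectedComponentMk ⟨ℓ, hℓ⟩ = C → ℓ + 1 ∉ X → ℓ = p) ∧
      (∀ ℓ (hℓ : ℓ ∈ X), (IG X).connectedComponentMk ⟨ℓ, hℓ⟩ = C → ℓ - 1 ∉ X → ℓ = q) := by
  obtain ⟨⟨v, hv⟩, hvC⟩ := C.exists_rep
  obtain ⟨p, hp, hp1, hpr, hpu⟩ := exists_end X hn1 (Or.inl rfl) hx0 hv
  obtain ⟨q, hq, hq1, hqr, hqu⟩ := exists_end X hn1 (e := -1) (Or.inr rfl) hx0 hv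
  have hq1' : q - 1 ∉ X := by rwa [sub_eq_add_neg]
  refine ⟨p, q, hp, hq, ?_, ?_, hp1, hq1', ?_, ?_⟩
  · rw [← hvC]; exact (SimpleGraph.ConnectedComponent.sound hpr.symm)
  · rw [← hvC]; exact (SimpleGraph.ConnectedComponent.sound hqr.symm)
  · intro ℓ hℓ hmk h1
    apply hpu ℓ hℓ _ h1
    have : (IG X).connectedComponentMk ⟨ℓ, hℓ⟩ = (IG X).connectedComponentMk ⟨p, hp⟩ := by
      rw [hmk, ← hvC]; exact SimpleGraph.ConnectedComponent.sound hpr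
    exact (SimpleGraph.ConnectedComponent.eq.mp this).symm
  · intro ℓ hℓ hmk h1
    apply hqu ℓ hℓ _ (by rwa [← sub_eq_add_neg])
    have : (IG X).connectedComponentMk ⟨ℓ, hℓ⟩ = (IG X).connectedComponentMk ⟨q, hq⟩ := by
      rw [hmk, ← hvC]; exact SimpleGraph.ConnectedComponent.sound hqr
    exact (SimpleGraph.ConnectedComponent.eq.mp this).symm

def wt (A B : Finset (ZMod n)) (ℓ : ZMod n) : ℤ :=
  if ℓ ∈ A then (if ℓ ∈ B then 0 else 1) else if ℓ ∈ B then -1 else 0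

lemma wt_pair {A B : Finset (ZMod n)} (hsA : Stable2 n A) (hsB : Stable2 n B)
    {ℓ : ZMod n} (h1 : ℓ ∈ A ∪ B) (h2 : ℓ + 1 ∈ A ∪ B) :
    wt A B ℓ + wt A B (ℓ + 1) = 0 := by
  by_cases hA : ℓ ∈ A
  · have h1A : ℓ + 1 ∉ A := hsA ℓ hA
    have hB : ℓ ∉ B := by
      intro hb
      rcases Finset.mem_union.mp h2 with h | h
      exacts [h1A h, hsB ℓ hb h]
    have h1B : ℓ + 1 ∈ B := (Finset.mem_union.mp h2).resolve_left h1A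
    simp [wt, hA, hB, h1A, h1B]
  · have hB : ℓ ∈ B := (Finset.mem_union.mp h1).resolve_left hA
    have h1B : ℓ + 1 ∉ B := hsB ℓ hB
    have h1A : ℓ + 1 ∈ A := (Finset.mem_union.mp h2).resolve_right h1B
    simp [wt, hA, hB, h1A, h1B]

lemma sum_wt (A B : Finset (ZMod n)) (hcard : A.card = B.card) :
    ∑ ℓ ∈ A ∪ B, wt A B ℓ = 0 := by
  classical
  have h1 : A ∪ B = A ∪ (B \ A) := (Finset.union_sdiff_self_eq_union).symm
  rw [h1, Finset.sum_union Finset.disjoint_sdiff]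
  have h2 : ∑ ℓ ∈ A, wt A B ℓ = ((A \ B).card : ℤ) := by
    calc ∑ ℓ ∈ A, wt A B ℓ = ∑ ℓ ∈ A, (if ℓ ∉ B then 1 else 0) := by
          refine Finset.sum_congr rfl (fun ℓ hℓ => ?_)
          by_cases hb : ℓ ∈ B <;> simp [wt, hℓ, hb]
    _ = ((A.filter (fun ℓ => ℓ ∉ B)).card : ℤ) := Finset.sum_boole _ _
    _ = ((A \ B).card : ℤ) := by rw [Finset.sdiff_eq_filter]
  have h3 : ∑ ℓ ∈ B \ A, wt A B ℓ = -((B \ A).card : ℤ) := by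
    calc ∑ ℓ ∈ B \ A, wt A B ℓ = ∑ _ℓ ∈ B \ A, (-1 : ℤ) := by
          refine Finset.sum_congr rfl (fun ℓ hℓ => ?_)
          obtain ⟨hB, hA⟩ := Finset.mem_sdiff.mp hℓ
          simp [wt, hA, hB]
    _ = -((B \ A).card : ℤ) := by simp
  rw [h2, h3]
  have e1 := Finset.card_sdiff_add_card_inter A B
  have e2 := Finset.card_sdiff_add_card_inter B A
  rw [Finset.inter_comm B A] at e2
  have : (A \ B).card = (B \ A).card := by omega
  rw [this]; ring

def HasEnd (X S T : Finset (ZMod n)) (C : (IG X).ConnectedComponent) : Prop :=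
  ∃ ℓ, ∃ hℓ : ℓ ∈ (↑X : Set (ZMod n)),
    (IG X).connectedComponentMk ⟨ℓ, hℓ⟩ = C ∧
    (ℓ ∈ (↑X : Set (ZMod n)) ∧ (ℓ + 1 ∉ (↑X : Set (ZMod n)) ∨ ℓ - 1 ∉ (↑X : Set (ZMod n)))) ∧
    ℓ ∈ S \ T

theorem main (A B : Finset (ZMod n)) (hsA : Stable2 n A) (hsB : Stable2 n B)
    (hcard : A.card = B.card) (hne : A ≠ B) :
    Nat.card {C : (IG (A ∪ B)).ConnectedComponent //
        HasEnd (A ∪ B) A B C ∧ ¬ HasEnd (A ∪ B) B A C} =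
    Nat.card {C : (IG (A ∪ B)).ConnectedComponent //
        HasEnd (A ∪ B) B A C ∧ ¬ HasEnd (A ∪ B) A B C} := by
  classical
  by_cases hn1 : (1 : ZMod n) = 0
  · exfalso
    apply hne
    haveI : Subsingleton (ZMod n) := subsingleton_of_zero_eq_one hn1.symm
    apply Finset.eq_of_subset_of_card_le _ hcard.ge
    intro x hx
    have hBne : B.Nonempty := Finset.card_pos.mp (hcard ▸ Finset.card_pos.mpr ⟨x, hx⟩)
    obtain ⟨y, hy⟩ := hBne
    rwa [Subsingleton.elim x y]
  by_cases hXall : ∃ x0, x0 ∉ A ∪ B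
  case neg =>
    push_neg at hXall
    have hnoend : ∀ S T (C : (IG (A ∪ B)).ConnectedComponent), ¬ HasEnd (A ∪ B) S T C := by
      rintro S T C ⟨ℓ, hℓ, -, ⟨-, hor⟩, -⟩
      rcases hor with h1 | h1 <;> exact h1 (hXall _)
    haveI hE1 : IsEmpty {C : (IG (A ∪ B)).ConnectedComponent //
        HasEnd (A ∪ B) A B C ∧ ¬ HasEnd (A ∪ B) B A C} :=
      ⟨fun ⟨C, hC⟩ => hnoend _ _ C hC.1⟩
    haveI hE2 : IsEmpty {C : (IG (A ∪ B)).ConnectedComponent //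
        HasEnd (A ∪ B) B A C ∧ ¬ HasEnd (A ∪ B) A B C} :=
      ⟨fun ⟨C, hC⟩ => hnoend _ _ C hC.1⟩
    rw [Nat.card_of_isEmpty, Nat.card_of_isEmpty]
  case pos =>
  obtain ⟨x0, hx0⟩ := hXall
  haveI : Finite (IG (A ∪ B)).ConnectedComponent :=
    Finite.of_surjective ((IG (A ∪ B)).connectedComponentMk) (fun C => C.exists_rep)
  haveI : Fintype (IG (A ∪ B)).ConnectedComponent := Fintype.ofFinite _
  set w : ZMod n → ℤ := wt A B with hw
  set d : ZMod n → ℤ := fun ℓ =>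
    (if ℓ + 1 ∈ A ∪ B then 0 else w ℓ) + (if ℓ - 1 ∈ A ∪ B then 0 else w ℓ) with hd
  -- the total d-sum over X vanishes
  have sum_d : ∑ ℓ ∈ A ∪ B, d ℓ = 0 := by
    have hpt : ∀ ℓ, d ℓ = 2 * w ℓ - (if ℓ + 1 ∈ A ∪ B then w ℓ else 0)
        - (if ℓ - 1 ∈ A ∪ B then w ℓ else 0) := by
      intro ℓ
      by_cases hc1 : ℓ + 1 ∈ A ∪ B <;> by_cases hc2 : ℓ - 1 ∈ A ∪ B
      · simp only [hd, if_pos hc1, if_pos hc2]; ring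
      · simp only [hd, if_pos hc1, if_neg hc2]; ring
      · simp only [hd, if_neg hc1, if_pos hc2]; ring
      · simp only [hd, if_neg hc1, if_neg hc2]; ring
    have hS1 : ∑ ℓ ∈ A ∪ B, (if ℓ + 1 ∈ A ∪ B then w ℓ else 0)
        = ∑ ℓ ∈ (A ∪ B).filter (fun ℓ => ℓ + 1 ∈ A ∪ B), w ℓ := (Finset.sum_filter _ _).symm
    have hS2 : ∑ ℓ ∈ A ∪ B, (if ℓ - 1 ∈ A ∪ B then w ℓ else 0)
        = ∑ ℓ ∈ (A ∪ B).filter (fun ℓ => ℓ + 1 ∈ A ∪ B), w (ℓ + 1) := by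
      rw [← Finset.sum_filter]
      refine Finset.sum_bij' (i := fun a _ => a - 1) (j := fun a _ => a + 1) ?_ ?_ ?_ ?_ ?_
      · intro a ha
        obtain ⟨ha1, ha2⟩ := Finset.mem_filter.mp ha
        exact Finset.mem_filter.mpr ⟨ha2, by rw [sub_add_cancel]; exact ha1⟩
      · intro a ha
        obtain ⟨ha1, ha2⟩ := Finset.mem_filter.mp ha
        exact Finset.mem_filter.mpr ⟨ha2, by rw [add_sub_cancel_right]; exact ha1⟩
      · intro a _
        show a - 1 + 1 = a
        rw [sub_add_cancel]
      · intro a _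
        show a + 1 - 1 = a
        rw [add_sub_cancel_right]
      · intro a _
        show w a = w (a - 1 + 1)
        rw [sub_add_cancel]
    have hzero : ∑ ℓ ∈ (A ∪ B).filter (fun ℓ => ℓ + 1 ∈ A ∪ B), w ℓ
        + ∑ ℓ ∈ (A ∪ B).filter (fun ℓ => ℓ + 1 ∈ A ∪ B), w (ℓ + 1) = 0 := by
      rw [← Finset.sum_add_distrib]
      have hterm : ∀ ℓ ∈ (A ∪ B).filter (fun ℓ => ℓ + 1 ∈ A ∪ B), w ℓ + w (ℓ + 1) = 0 := by
        intro ℓ hℓ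
        obtain ⟨hℓ1, hℓ2⟩ := Finset.mem_filter.mp hℓ
        exact wt_pair hsA hsB hℓ1 hℓ2
      rw [Finset.sum_congr rfl hterm, Finset.sum_const_zero]
    have hsw := sum_wt A B hcard
    calc ∑ ℓ ∈ A ∪ B, d ℓ
        = ∑ ℓ ∈ A ∪ B, (2 * w ℓ - (if ℓ + 1 ∈ A ∪ B then w ℓ else 0)
            - (if ℓ - 1 ∈ A ∪ B then w ℓ else 0)) := Finset.sum_congr rfl (fun ℓ _ => hpt ℓ)
      _ = 2 * (∑ ℓ ∈ A ∪ B, w ℓ) - (∑ ℓ ∈ A ∪ B, (if ℓ + 1 ∈ A ∪ B then w ℓ else 0))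
            - (∑ ℓ ∈ A ∪ B, (if ℓ - 1 ∈ A ∪ B then w ℓ else 0)) := by
          rw [Finset.sum_sub_distrib, Finset.sum_sub_distrib, Finset.mul_sum]
      _ = 0 := by rw [hsw, hS1, hS2]; linarith [hzero]
  -- fiberwise decomposition over connected components
  have hfib : ∑ C : (IG (A ∪ B)).ConnectedComponent,
      ∑ v ∈ Finset.univ.filter (fun v => (IG (A ∪ B)).connectedComponentMk v = C), d ↑v
      = ∑ v : ↥(↑(A ∪ B) : Set (ZMod n)), d ↑v :=
    Finset.sum_fiberwise _ _ _
  have hvert : ∑ v : ↥(↑(A ∪ B) : Set (ZMod n)), d ↑v = ∑ ℓ ∈ A ∪ B, d ℓ := by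
    rw [Finset.sum_set_coe]
    congr 1
    simp
  -- per-component value
  have FC : ∀ C : (IG (A ∪ B)).ConnectedComponent,
      ∑ v ∈ Finset.univ.filter (fun v => (IG (A ∪ B)).connectedComponentMk v = C), d ↑v
      = (if HasEnd (A ∪ B) A B C ∧ ¬ HasEnd (A ∪ B) B A C then 2 else 0)
        + (if HasEnd (A ∪ B) B A C ∧ ¬ HasEnd (A ∪ B) A B C then (-2) else 0) := by
    intro C
    obtain ⟨p, q, hp, hq, hmkp, hmkq, hp1, hq1, uniqp, uniqq⟩ := ends (A ∪ B) hn1 hx0 C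
    have hmemp : (⟨p, hp⟩ : ↥(↑(A ∪ B) : Set (ZMod n))) ∈
        Finset.univ.filter (fun v => (IG (A ∪ B)).connectedComponentMk v = C) :=
      Finset.mem_filter.mpr ⟨Finset.mem_univ _, hmkp⟩
    have hmemq : (⟨q, hq⟩ : ↥(↑(A ∪ B) : Set (ZMod n))) ∈
        Finset.univ.filter (fun v => (IG (A ∪ B)).connectedComponentMk v = C) :=
      Finset.mem_filter.mpr ⟨Finset.mem_univ _, hmkq⟩
    have hsum1 : ∑ v ∈ Finset.univ.filter (fun v => (IG (A ∪ B)).connectedComponentMk v = C),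
        (if (↑v : ZMod n) + 1 ∈ A ∪ B then 0 else w ↑v) = w p := by
      have h0 := Finset.sum_eq_single_of_mem
        (f := fun v : ↥(↑(A ∪ B) : Set (ZMod n)) => if (↑v : ZMod n) + 1 ∈ A ∪ B then 0 else w ↑v)
        _ hmemp ?_
      · rw [h0]
        show (if p + 1 ∈ A ∪ B then (0 : ℤ) else w p) = w p
        rw [if_neg hp1]
      · rintro ⟨b, hb⟩ hbmem hbne
        show (if b + 1 ∈ A ∪ B then (0 : ℤ) else w b) = 0
        by_cases hb1 : b + 1 ∈ A ∪ B
        · rw [if_pos hb1]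
        · exact absurd (Subtype.ext (uniqp b hb (Finset.mem_filter.mp hbmem).2 hb1)) hbne
    have hsum2 : ∑ v ∈ Finset.univ.filter (fun v => (IG (A ∪ B)).connectedComponentMk v = C),
        (if (↑v : ZMod n) - 1 ∈ A ∪ B then 0 else w ↑v) = w q := by
      have h0 := Finset.sum_eq_single_of_mem
        (f := fun v : ↥(↑(A ∪ B) : Set (ZMod n)) => if (↑v : ZMod n) - 1 ∈ A ∪ B then 0 else w ↑v)
        _ hmemq ?_
      · rw [h0]
        show (if q - 1 ∈ A ∪ B then (0 : ℤ) else w q) = w q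
        rw [if_neg hq1]
      · rintro ⟨b, hb⟩ hbmem hbne
        show (if b - 1 ∈ A ∪ B then (0 : ℤ) else w b) = 0
        by_cases hb1 : b - 1 ∈ A ∪ B
        · rw [if_pos hb1]
        · exact absurd (Subtype.ext (uniqq b hb (Finset.mem_filter.mp hbmem).2 hb1)) hbne
    have hsplit : ∑ v ∈ Finset.univ.filter (fun v => (IG (A ∪ B)).connectedComponentMk v = C),
        d ↑v = w p + w q := by
      simp only [hd]
      rw [Finset.sum_add_distrib, hsum1, hsum2]
    rw [hsplit]
    -- characterize HasEnd
    have hAiff : HasEnd (A ∪ B) A B C ↔ (p ∈ A \ B ∨ q ∈ A \ B) := by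
      constructor
      · rintro ⟨ℓ, hℓ, hmk, ⟨-, hor⟩, hℓm⟩
        rcases hor with hh | hh
        · left; rw [← uniqp ℓ hℓ hmk hh]; exact hℓm
        · right; rw [← uniqq ℓ hℓ hmk hh]; exact hℓm
      · rintro (hpm | hqm)
        · exact ⟨p, hp, hmkp, ⟨hp, Or.inl hp1⟩, hpm⟩
        · exact ⟨q, hq, hmkq, ⟨hq, Or.inr hq1⟩, hqm⟩
    have hBiff : HasEnd (A ∪ B) B A C ↔ (p ∈ B \ A ∨ q ∈ B \ A) := by
      constructor
      · rintro ⟨ℓ, hℓ, hmk, ⟨-, hor⟩, hℓm⟩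
        rcases hor with hh | hh
        · left; rw [← uniqp ℓ hℓ hmk hh]; exact hℓm
        · right; rw [← uniqq ℓ hℓ hmk hh]; exact hℓm
      · rintro (hpm | hqm)
        · exact ⟨p, hp, hmkp, ⟨hp, Or.inl hp1⟩, hpm⟩
        · exact ⟨q, hq, hmkq, ⟨hq, Or.inr hq1⟩, hqm⟩
    have hH : ∀ ℓ, ℓ ∈ A → ℓ ∈ B → (ℓ + 1 ∉ A ∪ B ∧ ℓ - 1 ∉ A ∪ B) := by
      intro ℓ hA' hB'
      constructor
      · intro hc
        rcases Finset.mem_union.mp hc with hh | hh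
        exacts [hsA ℓ hA' hh, hsB ℓ hB' hh]
      · intro hc
        rcases Finset.mem_union.mp hc with hh | hh
        · exact hsA _ hh (by rw [sub_add_cancel]; exact hA')
        · exact hsB _ hh (by rw [sub_add_cancel]; exact hB')
    have hqp : p ∈ A → p ∈ B → q = p := fun h1 h2 => (uniqq p hp hmkp (hH p h1 h2).2).symm
    have hpq : q ∈ A → q ∈ B → p = q := fun h1 h2 => (uniqp q hq hmkq (hH q h1 h2).1).symm
    have tri : ∀ x, x ∈ A ∪ B → (x ∈ A ∧ x ∉ B) ∨ (x ∈ B ∧ x ∉ A) ∨ (x ∈ A ∧ x ∈ B) := by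
      intro x hx
      by_cases h1 : x ∈ A <;> by_cases h2 : x ∈ B
      · exact Or.inr (Or.inr ⟨h1, h2⟩)
      · exact Or.inl ⟨h1, h2⟩
      · exact Or.inr (Or.inl ⟨h2, h1⟩)
      · rcases Finset.mem_union.mp hx with hh | hh
        exacts [absurd hh h1, absurd hh h2]
    rcases tri p hp with ⟨hpA, hpB⟩ | ⟨hpB, hpA⟩ | ⟨hpA, hpB⟩ <;>
      rcases tri q hq with ⟨hqA, hqB⟩ | ⟨hqB, hqA⟩ | ⟨hqA, hqB⟩
    · -- p ∈ A\B, q ∈ A\B : A-component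
      have hA' : HasEnd (A ∪ B) A B C := hAiff.mpr (Or.inl (Finset.mem_sdiff.mpr ⟨hpA, hpB⟩))
      have hB' : ¬ HasEnd (A ∪ B) B A C := fun hhh => by
        rcases hBiff.mp hhh with hm | hm
        · exact (Finset.mem_sdiff.mp hm).2 hpA
        · exact (Finset.mem_sdiff.mp hm).2 hqA
      rw [if_pos ⟨hA', hB'⟩, if_neg (fun hhh => hhh.2 hA')]
      simp only [hw, wt, if_pos hpA, if_neg hpB, if_pos hqA, if_neg hqB]
      ring
    · -- p ∈ A\B, q ∈ B\A : mixed
      have hA' : HasEnd (A ∪ B) A B C := hAiff.mpr (Or.inl (Finset.mem_sdiff.mpr ⟨hpA, hpB⟩))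
      have hB' : HasEnd (A ∪ B) B A C := hBiff.mpr (Or.inr (Finset.mem_sdiff.mpr ⟨hqB, hqA⟩))
      rw [if_neg (fun hhh => hhh.2 hB'), if_neg (fun hhh => hhh.2 hA')]
      simp only [hw, wt, if_pos hpA, if_neg hpB, if_neg hqA, if_pos hqB]
      ring
    · -- p ∈ A\B, q ∈ A∩B : impossible
      exact absurd (by rw [hpq hqA hqB]; exact hqB) hpB
    · -- p ∈ B\A, q ∈ A\B : mixed
      have hA' : HasEnd (A ∪ B) A B C := hAiff.mpr (Or.inr (Finset.mem_sdiff.mpr ⟨hqA, hqB⟩))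
      have hB' : HasEnd (A ∪ B) B A C := hBiff.mpr (Or.inl (Finset.mem_sdiff.mpr ⟨hpB, hpA⟩))
      rw [if_neg (fun hhh => hhh.2 hB'), if_neg (fun hhh => hhh.2 hA')]
      simp only [hw, wt, if_neg hpA, if_pos hpB, if_pos hqA, if_neg hqB]
      ring
    · -- p ∈ B\A, q ∈ B\A : B-component
      have hB' : HasEnd (A ∪ B) B A C := hBiff.mpr (Or.inl (Finset.mem_sdiff.mpr ⟨hpB, hpA⟩))
      have hA' : ¬ HasEnd (A ∪ B) A B C := fun hhh => by
        rcases hAiff.mp hhh with hm | hm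
        · exact (Finset.mem_sdiff.mp hm).2 hpB
        · exact (Finset.mem_sdiff.mp hm).2 hqB
      rw [if_neg (fun hhh => hA' hhh.1), if_pos ⟨hB', hA'⟩]
      simp only [hw, wt, if_neg hpA, if_pos hpB, if_neg hqA, if_pos hqB]
      ring
    · -- p ∈ B\A, q ∈ A∩B : impossible
      exact absurd (by rw [hpq hqA hqB]; exact hqA) hpA
    · -- p ∈ A∩B, q ∈ A\B : impossible
      exact absurd (by rw [hqp hpA hpB]; exact hpB) hqB
    · -- p ∈ A∩B, q ∈ B\A : impossible
      exact absurd (by rw [hqp hpA hpB]; exact hpA) hqA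
    · -- p ∈ A∩B, q ∈ A∩B : H-component
      have hA' : ¬ HasEnd (A ∪ B) A B C := fun hhh => by
        rcases hAiff.mp hhh with hm | hm
        · exact (Finset.mem_sdiff.mp hm).2 hpB
        · exact (Finset.mem_sdiff.mp hm).2 hqB
      have hB' : ¬ HasEnd (A ∪ B) B A C := fun hhh => by
        rcases hBiff.mp hhh with hm | hm
        · exact (Finset.mem_sdiff.mp hm).2 hpA
        · exact (Finset.mem_sdiff.mp hm).2 hqA
      rw [if_neg (fun hhh => hA' hhh.1), if_neg (fun hhh => hB' hhh.1)]
      simp only [hw, wt, if_pos hpA, if_pos hpB, if_pos hqA, if_pos hqB]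
  -- assemble
  have htot : ∑ C : (IG (A ∪ B)).ConnectedComponent,
      ((if HasEnd (A ∪ B) A B C ∧ ¬ HasEnd (A ∪ B) B A C then (2 : ℤ) else 0)
        + (if HasEnd (A ∪ B) B A C ∧ ¬ HasEnd (A ∪ B) A B C then (-2 : ℤ) else 0)) = 0 := by
    calc ∑ C : (IG (A ∪ B)).ConnectedComponent,
        ((if HasEnd (A ∪ B) A B C ∧ ¬ HasEnd (A ∪ B) B A C then (2 : ℤ) else 0)
          + (if HasEnd (A ∪ B) B A C ∧ ¬ HasEnd (A ∪ B) A B C then (-2 : ℤ) else 0))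
        = ∑ C : (IG (A ∪ B)).ConnectedComponent,
          ∑ v ∈ Finset.univ.filter (fun v => (IG (A ∪ B)).connectedComponentMk v = C), d ↑v :=
        Finset.sum_congr rfl (fun C _ => (FC C).symm)
      _ = ∑ v : ↥(↑(A ∪ B) : Set (ZMod n)), d ↑v := hfib
      _ = ∑ ℓ ∈ A ∪ B, d ℓ := hvert
      _ = 0 := sum_d
  rw [Finset.sum_add_distrib] at htot
  have hA2 : ∑ C : (IG (A ∪ B)).ConnectedComponent,
      (if HasEnd (A ∪ B) A B C ∧ ¬ HasEnd (A ∪ B) B A C then (2 : ℤ) else 0)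
      = 2 * ((Finset.univ.filter
          (fun C => HasEnd (A ∪ B) A B C ∧ ¬ HasEnd (A ∪ B) B A C)).card : ℤ) := by
    rw [← Finset.sum_filter, Finset.sum_const, nsmul_eq_mul]
    ring
  have hB2 : ∑ C : (IG (A ∪ B)).ConnectedComponent,
      (if HasEnd (A ∪ B) B A C ∧ ¬ HasEnd (A ∪ B) A B C then (-2 : ℤ) else 0)
      = -2 * ((Finset.univ.filter
          (fun C => HasEnd (A ∪ B) B A C ∧ ¬ HasEnd (A ∪ B) A B C)).card : ℤ) := by
    rw [← Finset.sum_filter, Finset.sum_const, nsmul_eq_mul]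
    ring
  rw [hA2, hB2] at htot
  have hcards : ((Finset.univ.filter
        (fun C => HasEnd (A ∪ B) A B C ∧ ¬ HasEnd (A ∪ B) B A C)).card : ℤ)
      = ((Finset.univ.filter
        (fun C => HasEnd (A ∪ B) B A C ∧ ¬ HasEnd (A ∪ B) A B C)).card : ℤ) := by
    linarith
  have e1 : Nat.card {C : (IG (A ∪ B)).ConnectedComponent //
      HasEnd (A ∪ B) A B C ∧ ¬ HasEnd (A ∪ B) B A C}
      = (Finset.univ.filter
        (fun C => HasEnd (A ∪ B) A B C ∧ ¬ HasEnd (A ∪ B) B A C)).card := by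
    rw [Nat.card_eq_fintype_card, Fintype.card_subtype]
  have e2 : Nat.card {C : (IG (A ∪ B)).ConnectedComponent //
      HasEnd (A ∪ B) B A C ∧ ¬ HasEnd (A ∪ B) A B C}
      = (Finset.univ.filter
        (fun C => HasEnd (A ∪ B) B A C ∧ ¬ HasEnd (A ∪ B) A B C)).card := by
    rw [Nat.card_eq_fintype_card, Fintype.card_subtype]
  rw [e1, e2]
  exact_mod_cast hcards
end Stmt10

theorem stmt10 (n k : ℕ) (A B : SGVert n k) (hne : A ≠ B) (h : (A.1 ∩ B.1).Nonempty) :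
    let X : Set (ZMod n) := ↑(A.1 ∪ B.1)
    let G := (CycleGraph n).induce X
    let isEnd : ZMod n → Prop := fun ℓ => ℓ ∈ X ∧ (ℓ + 1 ∉ X ∨ ℓ - 1 ∉ X)
    let hasAEnd : G.ConnectedComponent → Prop := fun C =>
      ∃ ℓ, ∃ hℓ : ℓ ∈ X, G.connectedComponentMk ⟨ℓ, hℓ⟩ = C ∧ isEnd ℓ ∧ ℓ ∈ A.1 \ B.1
    let hasBEnd : G.ConnectedComponent → Prop := fun C =>
      ∃ ℓ, ∃ hℓ : ℓ ∈ X, G.connectedComponentMk ⟨ℓ, hℓ⟩ = C ∧ isEnd ℓ ∧ ℓ ∈ B.1 \ A.1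
    Nat.card {C : G.ConnectedComponent // hasAEnd C ∧ ¬ hasBEnd C} =
      Nat.card {C : G.ConnectedComponent // hasBEnd C ∧ ¬ hasAEnd C} := by
  intro X G isEnd hasAEnd hasBEnd
  exact Stmt10.main A.1 B.1 A.2.2 B.2.2 (by rw [A.2.1, B.2.1])
    (fun hab => hne (Subtype.ext hab))
end

section
/- Let A, B be vertices of SG(n,k) with |A ∩ B| = h, where 2k+2 ≤ n ≤ 4k−3. Then dist(A,B) ≤ 1 + 2h. -/
section Aux

variable {n k : ℕ}

lemma shift_stable (A : Finset (ZMod n)) (st : Stable2 n A) (ε : ZMod n) :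
    Stable2 n (A.image (· + ε)) := by
  intro i hi hi1
  simp only [Finset.mem_image] at hi hi1
  obtain ⟨a, ha, rfl⟩ := hi
  obtain ⟨a', ha', he⟩ := hi1
  have : a + 1 = a' := by linear_combination he.symm
  exact st a ha (this ▸ ha')

lemma shift_card (A : Finset (ZMod n)) (ε : ZMod n) :
    (A.image (· + ε)).card = A.card :=
  Finset.card_image_of_injective _ (add_left_injective ε)

lemma shift_disjoint_plus (A : Finset (ZMod n)) (st : Stable2 n A) :
    Disjoint A (A.image (· + 1)) := by
  rw [Finset.disjoint_left]
  intro z hz hz'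
  simp only [Finset.mem_image] at hz'
  obtain ⟨a, ha, he⟩ := hz'
  exact st a ha (he ▸ hz)

lemma shift_disjoint_minus (A : Finset (ZMod n)) (st : Stable2 n A) :
    Disjoint A (A.image (· + (-1))) := by
  rw [Finset.disjoint_left]
  intro z hz hz'
  simp only [Finset.mem_image] at hz'
  obtain ⟨a, ha, he⟩ := hz'
  have : z + 1 = a := by linear_combination -he
  exact st z hz (this ▸ ha)

/-- The main combinatorial contradiction: if every common element of `A` and `B` is
"run-interior" in `A` and every free position lies in `B`, we get a contradiction. -/
lemma no_bad (hn : 2 * k + 2 ≤ n) (A B : Finset (ZMod n))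
    (hA : A.card = k) (hB : B.card = k) (stB : Stable2 n B)
    (x0 : ZMod n) (hx0A : x0 ∈ A) (hx0B : x0 ∈ B)
    (hbad : ∀ x, x ∈ A → x ∈ B → x - 2 ∈ A ∧ x + 2 ∈ A)
    (hfree : ∀ y : ZMod n, y - 1 ∉ A → y ∉ A → y + 1 ∉ A → y ∈ B) : False := by
  have hk : 1 ≤ k := by
    by_contra hc
    interval_cases k
    · simp_all [Finset.card_eq_zero]
  haveI : NeZero n := ⟨by omega⟩
  -- every 4 consecutive positions meet A
  have hgap : ∀ z : ZMod n, z ∈ A ∨ z + 1 ∈ A ∨ z + 2 ∈ A ∨ z + 3 ∈ A := by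
    intro z
    by_contra hc
    push_neg at hc
    obtain ⟨h0, h1, h2, h3⟩ := hc
    have hb1 : z + 1 ∈ B := by
      refine hfree _ ?_ h1 ?_
      · rwa [add_sub_cancel_right]
      · rwa [show z + 1 + 1 = z + 2 by ring]
    have hb2 : z + 2 ∈ B := by
      refine hfree _ ?_ h2 ?_
      · rwa [show z + 2 - 1 = z + 1 by ring]
      · rwa [show z + 2 + 1 = z + 3 by ring]
    exact stB _ hb1 (by rwa [show z + 1 + 1 = z + 2 by ring])
  -- forward distance function
  have hgap' : ∀ z : ZMod n, ∃ t : ℕ, t ≤ 3 ∧ z + (t : ZMod n) ∈ A := by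
    intro z
    rcases hgap z with h | h | h | h
    · exact ⟨0, by omega, by simpa using h⟩
    · exact ⟨1, by omega, by simpa using h⟩
    · exact ⟨2, by omega, by push_cast; exact h⟩
    · exact ⟨3, by omega, by push_cast; exact h⟩
  have hex : ∀ b : ZMod n, ∃ t : ℕ, b + (t : ZMod n) ∈ A := by
    intro b
    obtain ⟨t, _, ht⟩ := hgap' b
    exact ⟨t, ht⟩
  classical
  set d : ZMod n → ℕ := fun b => Nat.find (hex b) with hd
  have hdA : ∀ b : ZMod n, b + (d b : ZMod n) ∈ A := fun b => Nat.find_spec (hex b)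
  have hdmin : ∀ b : ZMod n, ∀ s : ℕ, s < d b → b + (s : ZMod n) ∉ A :=
    fun b s hs => Nat.find_min (hex b) hs
  have hd3 : ∀ b : ZMod n, d b ≤ 3 := by
    intro b
    obtain ⟨t, ht3, ht⟩ := hgap' b
    exact le_trans (Nat.find_le (show b + ((t : ℕ) : ZMod n) ∈ A from ht)) ht3
  -- injectivity of b ↦ b + d b on B
  have half : ∀ b ∈ B, ∀ b' ∈ B, d b' ≤ d b →
      b + (d b : ZMod n) = b' + (d b' : ZMod n) → b = b' := by
    intro b hb b' hb' hle heq
    have h3 : d b ≤ 3 := hd3 b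
    have hb'eq : b' = b + ((d b - d b' : ℕ) : ZMod n) := by
      rw [Nat.cast_sub hle]
      linear_combination -heq
    have hcases : d b' = d b ∨ d b = d b' + 1 ∨ (d b' = 0 ∧ 2 ≤ d b) ∨
        (d b' = 1 ∧ d b = 3) := by omega
    rcases hcases with h | h | ⟨h, h2⟩ | ⟨h, h2⟩
    · rw [h] at heq
      exact add_right_cancel heq
    · exfalso
      have : b' = b + 1 := by
        rw [hb'eq, h]
        norm_num
      exact stB b hb (this ▸ hb')
    · exfalso
      have hb'A : b' ∈ A := by
        have := hdA b'
        rwa [h, Nat.cast_zero, add_zero] at this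
      have hsub := (hbad b' hb'A hb').1
      have he2 : b' - 2 = b + ((d b - 2 : ℕ) : ZMod n) := by
        rw [hb'eq, h, Nat.cast_sub (by omega), Nat.cast_sub (by omega)]
        push_cast
        ring
      exact hdmin b (d b - 2) (by omega) (he2 ▸ hsub)
    · exfalso
      have hbe : b' = b + 2 := by
        rw [hb'eq, h, h2]
        norm_num
      have h0 : b ∉ A := by
        have := hdmin b 0 (by omega)
        rwa [Nat.cast_zero, add_zero] at this
      have h1 : b + 1 ∉ A := by
        have := hdmin b 1 (by omega)
        rwa [Nat.cast_one] at this
      have h2' : b + 2 ∉ A := by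
        have := hdmin b 2 (by omega)
        rwa [Nat.cast_two] at this
      have : b + 1 ∈ B := by
        refine hfree _ ?_ h1 ?_
        · rwa [add_sub_cancel_right]
        · rwa [show b + 1 + 1 = b + 2 by ring]
      exact stB b hb this
  have hinj : Set.InjOn (fun b => b + (d b : ZMod n)) B := by
    intro b hb b' hb' he
    simp only [Finset.mem_coe] at hb hb'
    rcases le_total (d b') (d b) with h | h
    · exact half b hb b' hb' h he
    · exact (half b' hb' b hb h he.symm).symm
  have himg : B.image (fun b => b + (d b : ZMod n)) = A := by
    apply Finset.eq_of_subset_of_card_le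
    · intro a ha
      simp only [Finset.mem_image] at ha
      obtain ⟨b, _, rfl⟩ := ha
      exact hdA b
    · rw [Finset.card_image_of_injOn hinj, hB, hA]
  have hsurj : ∀ a ∈ A, ∃ b ∈ B, b + (d b : ZMod n) = a := by
    intro a ha
    rw [← himg] at ha
    simpa only [Finset.mem_image] using ha
  -- chain step
  have hstep : ∀ x : ZMod n, x ∈ A → x ∈ B → x + 2 ∈ A ∧ x + 2 ∈ B := by
    intro x hxA hxB
    have hx2A : x + 2 ∈ A := (hbad x hxA hxB).2
    refine ⟨hx2A, ?_⟩
    obtain ⟨b, hbB, hbφ⟩ := hsurj (x + 2) hx2A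
    have h3 := hd3 b
    have hcases : d b = 0 ∨ d b = 1 ∨ d b = 2 ∨ d b = 3 := by omega
    rcases hcases with h | h | h | h
    · rw [h, Nat.cast_zero, add_zero] at hbφ
      exact hbφ ▸ hbB
    · exfalso
      rw [h, Nat.cast_one] at hbφ
      have hbx : b = x + 1 := by linear_combination hbφ
      exact stB x hxB (hbx ▸ hbB)
    · exfalso
      rw [h, Nat.cast_two] at hbφ
      have hbx : b = x := by linear_combination hbφ
      have h0 : b ∉ A := by
        have := hdmin b 0 (by omega)
        rwa [Nat.cast_zero, add_zero] at this
      rw [hbx] at h0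
      exact h0 hxA
    · exfalso
      rw [h] at hbφ
      have hbx : b + 1 = x := by
        have : ((3 : ℕ) : ZMod n) = 3 := by norm_num
        rw [this] at hbφ
        linear_combination hbφ
      have h1 : b + 1 ∉ A := by
        have := hdmin b 1 (by omega)
        rwa [Nat.cast_one] at this
      rw [hbx] at h1
      exact h1 hxA
  -- the chain
  have hchain : ∀ j : ℕ, x0 + ((2 * j : ℕ) : ZMod n) ∈ A := by
    have key : ∀ j : ℕ, x0 + ((2 * j : ℕ) : ZMod n) ∈ A ∧ x0 + ((2 * j : ℕ) : ZMod n) ∈ B := by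
      intro j
      induction j with
      | zero => simpa using ⟨hx0A, hx0B⟩
      | succ j ih =>
        have hs := hstep _ ih.1 ih.2
        have heq : x0 + ((2 * (j + 1) : ℕ) : ZMod n) = x0 + ((2 * j : ℕ) : ZMod n) + 2 := by
          push_cast
          ring
        rw [heq]
        exact hs
    exact fun j => (key j).1
  -- too many elements
  have hinj2 : Set.InjOn (fun j : ℕ => x0 + ((2 * j : ℕ) : ZMod n)) (Finset.range (k + 1)) := by
    intro i hi j hj he
    simp only [Finset.coe_range, Set.mem_Iio] at hi hj
    have hij : ((2 * i : ℕ) : ZMod n) = ((2 * j : ℕ) : ZMod n) := add_left_cancel he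
    have hv := congrArg ZMod.val hij
    rw [ZMod.val_cast_of_lt (by omega : 2 * i < n), ZMod.val_cast_of_lt (by omega : 2 * j < n)] at hv
    omega
  have hsub : (Finset.range (k + 1)).image (fun j : ℕ => x0 + ((2 * j : ℕ) : ZMod n)) ⊆ A := by
    intro z hz
    simp only [Finset.mem_image] at hz
    obtain ⟨j, _, rfl⟩ := hz
    exact hchain j
  have hle := Finset.card_le_card hsub
  rw [Finset.card_image_of_injOn hinj2, Finset.card_range, hA] at hle
  omega

/-- Build the two-step reduction from the data of a removable element and a landing spot. -/
lemma build (hn : 2 * k + 2 ≤ n) (A B C : SGVert n k)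
    (x y : ZMod n) (hxA : x ∈ A.1) (hxB : x ∈ B.1) (hyA : y ∉ A.1) (hyB : y ∉ B.1)
    (hyp : y + 1 ∉ (A.1).erase x) (hym : y - 1 ∉ (A.1).erase x)
    (hCA : Disjoint A.1 C.1) (hyC : y ∉ C.1) :
    ∃ A' : SGVert n k, (A'.1 ∩ B.1).card < (A.1 ∩ B.1).card ∧
      (SG n k).Adj A C ∧ (SG n k).Adj C A' := by
  obtain ⟨hAcard, stA⟩ := A.2
  have hk : 1 ≤ k := by
    rw [← hAcard]
    exact Finset.card_pos.2 ⟨x, hxA⟩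
  haveI : NeZero n := ⟨by omega⟩
  have h1ne : (1 : ZMod n) ≠ 0 := by
    intro he
    have : ((1 : ℕ) : ZMod n) = 0 := by exact_mod_cast he
    rw [ZMod.natCast_eq_zero_iff] at this
    have := Nat.le_of_dvd one_pos this
    omega
  set S : Finset (ZMod n) := insert y ((A.1).erase x) with hS
  have hyS : y ∉ (A.1).erase x := fun hc => hyA (Finset.mem_of_mem_erase hc)
  have hScard : S.card = k := by
    rw [hS, Finset.card_insert_of_notMem hyS, Finset.card_erase_of_mem hxA, hAcard]
    omega
  have hSst : Stable2 n S := by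
    intro i hi hi1
    rw [hS, Finset.mem_insert] at hi hi1
    rcases hi with rfl | hi
    · rcases hi1 with he | hi1
      · exact h1ne (by linear_combination he)
      · exact hyp hi1
    · rcases hi1 with he | hi1
      · apply hym
        rw [← he, add_sub_cancel_right]
        exact hi
      · exact stA i (Finset.mem_of_mem_erase hi) (Finset.mem_of_mem_erase hi1)
  refine ⟨⟨S, hScard, hSst⟩, ?_, ?_, ?_⟩
  · -- card decrease
    have hsub : S ∩ B.1 ⊆ (A.1 ∩ B.1).erase x := by
      intro z hz
      rw [Finset.mem_inter] at hz
      obtain ⟨hz1, hz2⟩ := hz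
      rw [hS, Finset.mem_insert] at hz1
      rcases hz1 with rfl | hz1
      · exact absurd hz2 hyB
      · rw [Finset.mem_erase] at hz1 ⊢
        exact ⟨hz1.1, Finset.mem_inter.2 ⟨hz1.2, hz2⟩⟩
    calc (S ∩ B.1).card ≤ ((A.1 ∩ B.1).erase x).card := Finset.card_le_card hsub
      _ < (A.1 ∩ B.1).card := by
          rw [Finset.card_erase_of_mem (Finset.mem_inter.2 ⟨hxA, hxB⟩)]
          have : 0 < (A.1 ∩ B.1).card := Finset.card_pos.2 ⟨x, Finset.mem_inter.2 ⟨hxA, hxB⟩⟩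
          omega
  · -- Adj A C
    refine ⟨?_, hCA⟩
    intro he
    rw [he] at hCA
    rw [disjoint_self] at hCA
    have : C.1.card = k := C.2.1
    rw [hCA] at this
    simp at this
    omega
  · -- Adj C A'
    have hdisj : Disjoint C.1 S := by
      rw [Finset.disjoint_right]
      intro z hz
      rw [hS, Finset.mem_insert] at hz
      rcases hz with rfl | hz
      · exact hyC
      · exact fun hc => (Finset.disjoint_left.1 hCA) (Finset.mem_of_mem_erase hz) hc
    refine ⟨?_, hdisj⟩
    intro he
    have hCS : C.1 = S := congrArg Subtype.val he
    rw [hCS, disjoint_self] at hdisj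
    rw [hdisj] at hScard
    simp at hScard
    omega

/-- The key step: if `A ∩ B` is nonempty, there is a 2-step move reducing the intersection. -/
lemma step (hn : 2 * k + 2 ≤ n) (A B : SGVert n k) (hne : (A.1 ∩ B.1).Nonempty) :
    ∃ A' C : SGVert n k, (A'.1 ∩ B.1).card < (A.1 ∩ B.1).card ∧
      (SG n k).Adj A C ∧ (SG n k).Adj C A' := by
  obtain ⟨hAcard, stA⟩ := A.2
  obtain ⟨hBcard, stB⟩ := B.2
  obtain ⟨x0, hx0⟩ := hne
  rw [Finset.mem_inter] at hx0
  obtain ⟨hx0A, hx0B⟩ := hx0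
  have hk : 1 ≤ k := by
    rw [← hAcard]
    exact Finset.card_pos.2 ⟨x0, hx0A⟩
  haveI : NeZero n := ⟨by omega⟩
  -- the two shifted candidate C's
  have hCp : ((A.1).image (· + 1)).card = k ∧ Stable2 n ((A.1).image (· + 1)) :=
    ⟨by rw [shift_card, hAcard], shift_stable _ stA 1⟩
  have hCm : ((A.1).image (· + (-1))).card = k ∧ Stable2 n ((A.1).image (· + (-1))) :=
    ⟨by rw [shift_card, hAcard], shift_stable _ stA (-1)⟩
  set Cp : SGVert n k := ⟨(A.1).image (· + 1), hCp⟩ with hCpdef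
  set Cm : SGVert n k := ⟨(A.1).image (· + (-1)), hCm⟩ with hCmdef
  by_cases hall : ∀ z ∈ A.1 ∩ B.1, z - 2 ∈ A.1 ∧ z + 2 ∈ A.1
  · -- all common elements run-interior: find a free y
    by_cases hfr : ∃ y : ZMod n, y - 1 ∉ A.1 ∧ y ∉ A.1 ∧ y + 1 ∉ A.1 ∧ y ∉ B.1
    · obtain ⟨y, hy1, hy2, hy3, hy4⟩ := hfr
      obtain ⟨A', hc, h1, h2⟩ := build hn A B Cp x0 y hx0A hx0B hy2 hy4
        (fun hc => hy3 (Finset.mem_of_mem_erase hc))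
        (fun hc => hy1 (Finset.mem_of_mem_erase hc))
        (shift_disjoint_plus _ stA)
        (by
          intro hc
          rw [hCpdef] at hc
          simp only [Finset.mem_image] at hc
          obtain ⟨a, ha, he⟩ := hc
          apply hy1
          rw [show y - 1 = a from by linear_combination -he]
          exact ha)
      exact ⟨A', Cp, hc, h1, h2⟩
    · exfalso
      push_neg at hfr
      refine no_bad hn A.1 B.1 hAcard hBcard stB x0 hx0A hx0B
        (fun x hx1 hx2 => hall x (Finset.mem_inter.2 ⟨hx1, hx2⟩)) ?_
      intro y hy1 hy2 hy3
      by_contra hyB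
      exact hyB (hfr y hy1 hy2 hy3)
  · push_neg at hall
    obtain ⟨x, hx, hxcase⟩ := hall
    rw [Finset.mem_inter] at hx
    obtain ⟨hxA, hxB⟩ := hx
    by_cases hxm : x - 2 ∈ A.1
    · -- then x + 2 ∉ A : move x to x+1, C = A - 1
      have hxp : x + 2 ∉ A.1 := by tauto
      have hy1A : x + 1 ∉ A.1 := stA x hxA
      have hy1B : x + 1 ∉ B.1 := stB x hxB
      obtain ⟨A', hc, h1, h2⟩ := build hn A B Cm x (x + 1) hxA hxB hy1A hy1B
        (by
          intro hc
          apply hxp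
          rw [show x + 2 = x + 1 + 1 by ring]
          exact Finset.mem_of_mem_erase hc)
        (by
          rw [show x + 1 - 1 = x by ring]
          simp)
        (shift_disjoint_minus _ stA)
        (by
          intro hc
          rw [hCmdef] at hc
          simp only [Finset.mem_image] at hc
          obtain ⟨a, ha, he⟩ := hc
          apply hxp
          rw [show x + 2 = a from by linear_combination -he]
          exact ha)
      exact ⟨A', Cm, hc, h1, h2⟩
    · -- move x to x-1, C = A + 1
      have hy1A : x - 1 ∉ A.1 := by
        intro hc
        have := stA (x - 1) hc
        rw [sub_add_cancel] at this
        exact this hxA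
      have hy1B : x - 1 ∉ B.1 := by
        intro hc
        have := stB (x - 1) hc
        rw [sub_add_cancel] at this
        exact this hxB
      obtain ⟨A', hc, h1, h2⟩ := build hn A B Cp x (x - 1) hxA hxB
        hy1A hy1B
        (by
          rw [sub_add_cancel]
          simp)
        (by
          intro hc
          apply hxm
          rw [show x - 2 = x - 1 - 1 by ring]
          exact Finset.mem_of_mem_erase hc)
        (shift_disjoint_plus _ stA)
        (by
          intro hc
          rw [hCpdef] at hc
          simp only [Finset.mem_image] at hc
          obtain ⟨a, ha, he⟩ := hc
          apply hxm
          rw [show x - 2 = a from by linear_combination -he]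
          exact ha)
      exact ⟨A', Cp, hc, h1, h2⟩

lemma walk_aux (hn : 2 * k + 2 ≤ n) (hk : 1 ≤ k) :
    ∀ m : ℕ, ∀ A B : SGVert n k, (A.1 ∩ B.1).card ≤ m →
      ∃ p : (SG n k).Walk A B, p.length ≤ 1 + 2 * m := by
  intro m
  induction m with
  | zero =>
    intro A B hc
    have hd : Disjoint A.1 B.1 := by
      rw [Finset.disjoint_iff_inter_eq_empty, ← Finset.card_eq_zero]
      omega
    have hne : A ≠ B := by
      intro he
      rw [he, Finset.inter_self] at hc
      have := B.2.1
      omega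
    exact ⟨SimpleGraph.Walk.cons ⟨hne, hd⟩ SimpleGraph.Walk.nil, le_rfl⟩
  | succ m ih =>
    intro A B hc
    by_cases hle : (A.1 ∩ B.1).card ≤ m
    · obtain ⟨p, hp⟩ := ih A B hle
      exact ⟨p, by omega⟩
    · have hne : (A.1 ∩ B.1).Nonempty := Finset.card_pos.1 (by omega)
      obtain ⟨A', C, hlt, hAC, hCA'⟩ := step hn A B hne
      obtain ⟨p, hp⟩ := ih A' B (by omega)
      refine ⟨SimpleGraph.Walk.cons hAC (SimpleGraph.Walk.cons hCA' p), ?_⟩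
      simp only [SimpleGraph.Walk.length_cons]
      omega

end Aux

theorem stmt12 (n k h : ℕ) (h1 : 2 * k + 2 ≤ n) (h2 : n ≤ 4 * k - 3)
    (A B : SGVert n k) (hcap : (A.1 ∩ B.1).card = h) :
    (SG n k).dist A B ≤ 1 + 2 * h := by
  have hk : 1 ≤ k := by omega
  obtain ⟨p, hp⟩ := walk_aux h1 hk h A B (le_of_eq hcap)
  exact le_trans (SimpleGraph.dist_le p) hp
end

section
/- Let A, B, Y be vertices of SG(n,k) with |A ∩ Y| = h', |Y ∩ B| = h'', and h* = h' + h'' ≥ 2, where 2k+2 ≤ n ≤ 4k−3. Then dist(A,B) ≤ 2 + 2h*. -/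
namespace Stmt13Aux

open Finset

lemma zmod_cast_ne_zero {n : ℕ} (m : ℕ) (h0 : 0 < m) (h : m < n) : ((m : ℕ) : ZMod n) ≠ 0 := by
  intro hh
  haveI : NeZero n := ⟨by omega⟩
  rw [ZMod.natCast_eq_zero_iff] at hh
  exact absurd (Nat.le_of_dvd h0 hh) (by omega)

lemma one_ne {n : ℕ} (hn : 2 ≤ n) : (1 : ZMod n) ≠ 0 := by
  have := zmod_cast_ne_zero (n := n) 1 (by omega) (by omega)
  simpa using this

lemma two_ne {n : ℕ} (hn : 3 ≤ n) : (2 : ZMod n) ≠ 0 := by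
  have := zmod_cast_ne_zero (n := n) 2 (by omega) (by omega)
  simpa using this

/-- The key move lemma: if two 2-stable `k`-sets intersect, some common element `x`
can be transferred to a fresh position `y` outside `Z`. -/
lemma move_exists {n k : ℕ} (hn : 2 * k + 2 ≤ n) (X Z : Finset (ZMod n))
    (hXc : X.card = k) (hZc : Z.card = k) (hX : Stable2 n X) (hZ : Stable2 n Z)
    (hne : (X ∩ Z).Nonempty) :
    ∃ x y : ZMod n, x ∈ X ∧ x ∈ Z ∧ y ∉ Z ∧ y ∉ X ∧
      y + 1 ∉ X.erase x ∧ y - 1 ∉ X.erase x := by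
  obtain ⟨x₀, hx₀⟩ := hne
  have hx₀X : x₀ ∈ X := (Finset.mem_inter.mp hx₀).1
  have hx₀Z : x₀ ∈ Z := (Finset.mem_inter.mp hx₀).2
  by_contra hcon
  push_neg at hcon
  -- hcon : ∀ x y, x ∈ X → x ∈ Z → y ∉ Z → y ∉ X → y+1 ∉ X.erase x → y-1 ∈ X.erase x
  have H1 : ∀ x : ZMod n, x ∈ X → x ∈ Z → (x + 2 ∈ X ∧ x - 2 ∈ X) := by
    intro x hxX hxZ
    constructor
    · by_contra h2
      have hthis := hcon x (x + 1) hxX hxZ (hZ x hxZ) (hX x hxX)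
        (by
          intro hmem
          exact h2 (by
            have : x + 1 + 1 = x + 2 := by ring
            rw [this] at hmem
            exact Finset.mem_of_mem_erase hmem))
      rw [show x + 1 - 1 = x by ring] at hthis
      exact (Finset.notMem_erase x X) hthis
    · by_contra h2
      have hy1 : x - 1 ∉ Z := by
        intro hmem
        have := hZ (x - 1) hmem
        rw [show x - 1 + 1 = x by ring] at this
        exact this hxZ
      have hy2 : x - 1 ∉ X := by
        intro hmem
        have := hX (x - 1) hmem
        rw [show x - 1 + 1 = x by ring] at this
        exact this hxX
      have hthis := hcon x (x - 1) hxX hxZ hy1 hy2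
        (by
          rw [show x - 1 + 1 = x by ring]
          exact Finset.notMem_erase x X)
      rw [show x - 1 - 1 = x - 2 by ring] at hthis
      exact h2 (Finset.mem_of_mem_erase hthis)
  have H2 : ∀ y : ZMod n, y ∉ X → y + 1 ∉ X → y - 1 ∉ X → y ∈ Z := by
    intro y hy hy1 hy2
    by_contra hyZ
    have := hcon x₀ y hx₀X hx₀Z hyZ hy
      (fun hmem => hy1 (Finset.mem_of_mem_erase hmem))
    exact hy2 (Finset.mem_of_mem_erase this)
  have NEXT : ∀ v : ZMod n, v ∈ X ∨ v - 1 ∈ X ∨ v - 2 ∈ X ∨ v - 3 ∈ X := by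
    intro v
    by_contra h
    push_neg at h
    obtain ⟨h0, h1, h2, h3⟩ := h
    have hv1 : v - 1 ∈ Z := H2 (v - 1) h1 (by rw [show v - 1 + 1 = v by ring]; exact h0)
      (by rw [show v - 1 - 1 = v - 2 by ring]; exact h2)
    have hv2 : v - 2 ∈ Z := H2 (v - 2) h2 (by rw [show v - 2 + 1 = v - 1 by ring]; exact h1)
      (by rw [show v - 2 - 1 = v - 3 by ring]; exact h3)
    have := hZ (v - 2) hv2
    rw [show v - 2 + 1 = v - 1 by ring] at this
    exact this hv1
  classical
  set g : ZMod n → ZMod n := fun z =>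
    if z ∈ X then z else if z - 1 ∈ X then z - 1 else if z - 2 ∈ X then z - 2 else z - 3 with hgdef
  have hg : ∀ z : ZMod n,
      (z ∈ X ∧ g z = z) ∨
      (z ∉ X ∧ z - 1 ∈ X ∧ g z = z - 1) ∨
      (z ∉ X ∧ z - 1 ∉ X ∧ z - 2 ∈ X ∧ g z = z - 2) ∨
      (z ∉ X ∧ z - 1 ∉ X ∧ z - 2 ∉ X ∧ z - 3 ∈ X ∧ g z = z - 3) := by
    intro z
    by_cases c0 : z ∈ X
    · exact Or.inl ⟨c0, by simp [hgdef, c0]⟩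
    by_cases c1 : z - 1 ∈ X
    · exact Or.inr (Or.inl ⟨c0, c1, by simp [hgdef, c0, c1]⟩)
    by_cases c2 : z - 2 ∈ X
    · exact Or.inr (Or.inr (Or.inl ⟨c0, c1, c2, by simp [hgdef, c0, c1, c2]⟩))
    · have c3 : z - 3 ∈ X := by
        rcases NEXT z with h | h | h | h
        · exact absurd h c0
        · exact absurd h c1
        · exact absurd h c2
        · exact h
      exact Or.inr (Or.inr (Or.inr ⟨c0, c1, c2, c3, by simp [hgdef, c0, c1, c2]⟩))
  -- adjacent pairs in Z are impossible
  have hZadj : ∀ z : ZMod n, z ∈ Z → z + 1 ∈ Z → False := fun z hz hz1 => hZ z hz hz1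
  have hinj : Set.InjOn g Z := by
    intro z hz z' hz' heq
    rcases hg z with ⟨hz0, e⟩ | ⟨hz0, hz1, e⟩ | ⟨hz0, hz1, hz2, e⟩ | ⟨hz0, hz1, hz2, hz3, e⟩ <;>
      rcases hg z' with ⟨hz0', e'⟩ | ⟨hz0', hz1', e'⟩ | ⟨hz0', hz1', hz2', e'⟩ |
        ⟨hz0', hz1', hz2', hz3', e'⟩ <;> rw [e, e'] at heq
    -- (0,0)
    · exact heq
    -- (0,1): z = z' - 1
    · exact absurd hz' (fun hzz => hZadj z hz (by rw [show z + 1 = z' by linear_combination heq]; exact hzz))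
    -- (0,2): z = z' - 2 ; z ∈ X ∩ Z so z + 2 = z' ∈ X, contradiction with hz0'
    · exact absurd ((H1 z hz0 hz).1) (by rw [show z + 2 = z' by linear_combination heq]; exact hz0')
    -- (0,3): z = z' - 3 ; z + 2 = z' - 1 ∈ X contradiction with hz1'
    · exact absurd ((H1 z hz0 hz).1) (by rw [show z + 2 = z' - 1 by linear_combination heq]; exact hz1')
    -- (1,0): z - 1 = z'
    · exact absurd hz (fun hzz => hZadj z' hz' (by rw [show z' + 1 = z by linear_combination -heq]; exact hzz))
    -- (1,1)
    · linear_combination heq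
    -- (1,2): z - 1 = z' - 2, z' = z + 1
    · exact absurd hz' (fun hzz => hZadj z hz (by rw [show z + 1 = z' by linear_combination heq]; exact hzz))
    -- (1,3): z - 1 = z' - 3, z' = z + 2; use H2 at z+1
    · exfalso
      have hy : z + 1 ∈ Z := by
        apply H2
        · rw [show z + 1 = z' - 1 by linear_combination heq]; exact hz1'
        · rw [show z + 1 + 1 = z' by linear_combination heq]; exact hz0'
        · rw [show z + 1 - 1 = z by ring]; exact hz0
      exact hZadj z hz hy
    -- (2,0): z - 2 = z'
    · exact absurd ((H1 z' hz0' hz').1) (by rw [show z' + 2 = z by linear_combination -heq]; exact hz0)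
    -- (2,1): z - 2 = z' - 1, z = z' + 1
    · exact absurd hz (fun hzz => hZadj z' hz' (by rw [show z' + 1 = z by linear_combination -heq]; exact hzz))
    -- (2,2)
    · linear_combination heq
    -- (2,3): z - 2 = z' - 3, z' = z + 1
    · exact absurd hz' (fun hzz => hZadj z hz (by rw [show z + 1 = z' by linear_combination heq]; exact hzz))
    -- (3,0): z - 3 = z', z' + 2 = z - 1 ∈ X contra hz1
    · exact absurd ((H1 z' hz0' hz').1) (by rw [show z' + 2 = z - 1 by linear_combination -heq]; exact hz1)
    -- (3,1): z - 3 = z' - 1, z' = z - 2; use H2 at z - 1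
    · exfalso
      have hy : z - 1 ∈ Z := by
        apply H2
        · exact hz1
        · rw [show z - 1 + 1 = z by ring]; exact hz0
        · rw [show z - 1 - 1 = z' by linear_combination heq]; exact hz0'
      exact hZadj z' hz' (by rw [show z' + 1 = z - 1 by linear_combination -heq]; exact hy)
    -- (3,2): z - 3 = z' - 2, z = z' + 1
    · exact absurd hz (fun hzz => hZadj z' hz' (by rw [show z' + 1 = z by linear_combination -heq]; exact hzz))
    -- (3,3)
    · linear_combination heq
  have himage : Z.image g = X := by
    apply Finset.eq_of_subset_of_card_le
    · intro a ha
      obtain ⟨z, hzZ, hz⟩ := Finset.mem_image.mp ha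
      rcases hg z with ⟨h, e⟩ | ⟨_, h, e⟩ | ⟨_, _, h, e⟩ | ⟨_, _, _, h, e⟩ <;>
        (rw [← hz, e]; exact h)
    · rw [Finset.card_image_of_injOn (by intro a ha b hb; exact hinj (by simpa using ha) (by simpa using hb)), hXc, hZc]
  have hprop : ∀ x : ZMod n, x ∈ X → x ∈ Z → (x - 2 ∈ X ∧ x - 2 ∈ Z) := by
    intro x hxX hxZ
    have hmem : x - 2 ∈ X := (H1 x hxX hxZ).2
    refine ⟨hmem, ?_⟩
    have : x - 2 ∈ Z.image g := by rw [himage]; exact hmem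
    obtain ⟨z, hzZ, hz⟩ := Finset.mem_image.mp this
    rcases hg z with ⟨hz0, e⟩ | ⟨hz0, hz1, e⟩ | ⟨hz0, hz1, hz2, e⟩ | ⟨hz0, hz1, hz2, hz3, e⟩ <;>
      rw [e] at hz
    · rw [← hz]; exact hzZ
    · exfalso
      exact hZadj z hzZ (by rw [show z + 1 = x by linear_combination hz]; exact hxZ)
    · exfalso
      exact hz0 (by rw [show z = x by linear_combination hz]; exact hxX)
    · exfalso
      exact hz1 (by rw [show z - 1 = x by linear_combination hz]; exact hxX)
  have hiter : ∀ j : ℕ, x₀ - ((2 * j : ℕ) : ZMod n) ∈ X ∧ x₀ - ((2 * j : ℕ) : ZMod n) ∈ Z := by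
    intro j
    induction j with
    | zero => simpa using ⟨hx₀X, hx₀Z⟩
    | succ j ih =>
      have := hprop _ ih.1 ih.2
      have harith : x₀ - ((2 * (j + 1) : ℕ) : ZMod n) = x₀ - ((2 * j : ℕ) : ZMod n) - 2 := by
        push_cast
        ring
      rw [harith]
      exact this
  have hcard : (Finset.range (k + 1)).card ≤ X.card := by
    apply Finset.card_le_card_of_injOn (fun j => x₀ - ((2 * j : ℕ) : ZMod n))
    · intro j _
      exact (hiter j).1
    · intro a ha b hb heq
      simp only [Finset.coe_range, Set.mem_Iio] at ha hb
      have h2 : ((2 * a : ℕ) : ZMod n) = ((2 * b : ℕ) : ZMod n) := sub_right_inj.mp heq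
      rw [ZMod.natCast_eq_natCast_iff'] at h2
      rw [Nat.mod_eq_of_lt (by omega), Nat.mod_eq_of_lt (by omega)] at h2
      omega
  rw [Finset.card_range, hXc] at hcard
  omega

lemma ne_of_disjoint {α : Type*} [DecidableEq α] {S T : Finset α} (hS : S.Nonempty)
    (h : Disjoint S T) : S ≠ T := by
  intro h'
  subst h'
  rw [disjoint_self] at h
  exact hS.ne_empty (by simpa using h)

/-- Existence of a common neighbor: a 2-stable `k`-set disjoint from `insert y X`. -/
lemma common_exists {n k : ℕ} (hn : 2 * k + 2 ≤ n) (X : Finset (ZMod n)) (x y : ZMod n)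
    (hXc : X.card = k) (hX : Stable2 n X) (hxX : x ∈ X) (hyX : y ∉ X)
    (hy1 : y + 1 ∉ X.erase x) (hym : y - 1 ∉ X.erase x) :
    ∃ C : Finset (ZMod n), C.card = k ∧ Stable2 n C ∧ Disjoint C (insert y X) := by
  classical
  have hk1 : 1 ≤ k := by rw [← hXc]; exact Finset.card_pos.mpr ⟨x, hxX⟩
  have hone : (1 : ZMod n) ≠ 0 := one_ne (by omega)
  have htwo : (2 : ZMod n) ≠ 0 := two_ne (by omega)
  set U : Finset (ZMod n) := insert y X with hU
  have hblock : ∀ u ∈ U, u + 1 ∈ U → u + 2 ∉ U := by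
    intro u hu hu1 hu2
    rcases Finset.mem_insert.mp hu with rfl | huX
    · -- u = y
      rcases Finset.mem_insert.mp hu1 with h | h
      · exact hone (by linear_combination h)
      · have hx' : u + 1 = x := by
          by_contra hne
          exact hy1 (Finset.mem_erase.mpr ⟨hne, h⟩)
        rcases Finset.mem_insert.mp hu2 with h2 | h2
        · exact htwo (by linear_combination h2)
        · have hxx : x + 1 ∈ X := by
            rw [show x + 1 = u + 2 by linear_combination -hx']; exact h2
          exact hX x (by rw [← hx']; exact h) hxx
    · rcases Finset.mem_insert.mp hu1 with h | h
      · -- u + 1 = y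
        rcases Finset.mem_insert.mp hu2 with h2 | h2
        · exact hone (by linear_combination h2 - h)
        · have hyp1 : y + 1 ∈ X := by
            rw [show y + 1 = u + 2 by linear_combination -h]; exact h2
          have hx1 : y + 1 = x := by
            by_contra hne2
            exact hy1 (Finset.mem_erase.mpr ⟨hne2, hyp1⟩)
          have hym1 : y - 1 ∈ X := by
            rw [show y - 1 = u by linear_combination -h]; exact huX
          have hx2 : y - 1 = x := by
            by_contra hne2
            exact hym (Finset.mem_erase.mpr ⟨hne2, hym1⟩)
          exact htwo (by linear_combination hx1 - hx2)
      · exact hX u huX h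
  set f : ZMod n → ZMod n := fun u => if u + 1 ∈ U then u + 2 else u + 1 with hf
  have hXU : X ⊆ U := Finset.subset_insert _ _
  have hfU : ∀ u ∈ U, f u ∉ U := by
    intro u hu
    by_cases h1 : u + 1 ∈ U
    · simpa [hf, h1] using hblock u hu h1
    · simpa [hf, h1] using h1
  have hinjf : Set.InjOn f X := by
    intro u hu v hv heq
    simp only [Finset.mem_coe] at hu hv
    by_cases h1 : u + 1 ∈ U <;> by_cases h2 : v + 1 ∈ U <;>
      simp only [hf, h1, h2, if_true, if_false] at heq
    · exact add_right_cancel heq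
    · exact absurd hv (by rw [show v = u + 1 by linear_combination -heq]; exact hX u hu)
    · exact absurd hu (by rw [show u = v + 1 by linear_combination heq]; exact hX v hv)
    · exact add_right_cancel heq
  refine ⟨X.image f, ?_, ?_, ?_⟩
  · rw [Finset.card_image_of_injOn hinjf, hXc]
  · intro c hc hc1
    obtain ⟨u, hu, hufc⟩ := Finset.mem_image.mp hc
    obtain ⟨v, hv, hvfc⟩ := Finset.mem_image.mp hc1
    by_cases h1 : u + 1 ∈ U <;> by_cases h2 : v + 1 ∈ U <;>
      simp only [hf, h1, h2, if_true, if_false] at hufc hvfc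
    · have hv1 : v = u + 1 := by linear_combination hvfc - hufc
      exact hX u hu (by rw [← hv1]; exact hv)
    · have hv1 : v = u + 2 := by linear_combination hvfc - hufc
      have hfu : f u = u + 2 := by simp [hf, h1]
      exact hfU u (hXU hu) (by rw [hfu, ← hv1]; exact hXU hv)
    · have hv1 : v = u := by linear_combination hvfc - hufc
      rw [hv1] at h2
      exact h1 h2
    · have hv1 : v = u + 1 := by linear_combination hvfc - hufc
      exact hX u hu (by rw [← hv1]; exact hv)
  · rw [Finset.disjoint_left]
    intro c hc
    obtain ⟨u, hu, huc⟩ := Finset.mem_image.mp hc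
    rw [← huc]
    exact hfU u (hXU hu)

/-- The inductive walk construction. -/
lemma walk_le {n k : ℕ} (hn : 2 * k + 2 ≤ n) (hk : 1 ≤ k) :
    ∀ (t : ℕ) (X Z : SGVert n k), (X.1 ∩ Z.1).card = t →
      ∃ w : (SG n k).Walk X Z, w.length ≤ 2 * t + 1 := by
  intro t
  induction t with
  | zero =>
    intro X Z ht
    have hdisj : Disjoint X.1 Z.1 := by
      rw [Finset.disjoint_iff_inter_eq_empty]
      exact Finset.card_eq_zero.mp ht
    have hXne : X.1.Nonempty := by
      rw [← Finset.card_pos, X.2.1]; omega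
    have hne : X ≠ Z := by
      intro h
      exact ne_of_disjoint hXne hdisj (by rw [h])
    exact ⟨SimpleGraph.Walk.cons ⟨hne, hdisj⟩ SimpleGraph.Walk.nil, le_refl _⟩
  | succ t ih =>
    intro X Z ht
    have hone : (1 : ZMod n) ≠ 0 := one_ne (by omega)
    have hne : (X.1 ∩ Z.1).Nonempty := by
      rw [← Finset.card_pos, ht]; omega
    obtain ⟨x, y, hxX, hxZ, hyZ, hyX, hy1, hym⟩ :=
      move_exists hn X.1 Z.1 X.2.1 Z.2.1 X.2.2 Z.2.2 hne
    have hyex : y ∉ X.1.erase x := fun h => hyX (Finset.mem_of_mem_erase h)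
    set X' : Finset (ZMod n) := insert y (X.1.erase x) with hX'
    have hcardX' : X'.card = k := by
      rw [hX', Finset.card_insert_of_notMem hyex, Finset.card_erase_of_mem hxX, X.2.1]
      omega
    have hstabX' : Stable2 n X' := by
      intro i hi hi1
      rcases Finset.mem_insert.mp hi with rfl | hiX
      · rcases Finset.mem_insert.mp hi1 with h | h
        · exact hone (by linear_combination h)
        · exact hy1 h
      · rcases Finset.mem_insert.mp hi1 with h | h
        · exact hym (by rw [show y - 1 = i by linear_combination -h]; exact hiX)
        · exact X.2.2 i (Finset.mem_of_mem_erase hiX) (Finset.mem_of_mem_erase h)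
    have hinter : X' ∩ Z.1 = (X.1 ∩ Z.1).erase x := by
      rw [hX', Finset.insert_inter_of_notMem hyZ, Finset.erase_inter]
    have hcard' : (X' ∩ Z.1).card = t := by
      rw [hinter, Finset.card_erase_of_mem (Finset.mem_inter.mpr ⟨hxX, hxZ⟩), ht]
      omega
    obtain ⟨C, hCc, hCs, hCd⟩ := common_exists hn X.1 x y X.2.1 X.2.2 hxX hyX hy1 hym
    have hCX : Disjoint C X.1 := hCd.mono_right (Finset.subset_insert _ _)
    have hCX' : Disjoint C X' := hCd.mono_right (by
      rw [hX']
      exact Finset.insert_subset_insert _ (Finset.erase_subset _ _))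
    have hCne : C.Nonempty := by rw [← Finset.card_pos, hCc]; omega
    set Xv' : SGVert n k := ⟨X', hcardX', hstabX'⟩ with hXv'
    set Cv : SGVert n k := ⟨C, hCc, hCs⟩ with hCv
    have adj1 : (SG n k).Adj X Cv := by
      refine ⟨?_, hCX.symm⟩
      intro h
      exact ne_of_disjoint hCne hCX (congrArg Subtype.val h.symm)
    have adj2 : (SG n k).Adj Cv Xv' := by
      refine ⟨?_, hCX'⟩
      intro h
      exact ne_of_disjoint hCne hCX' (congrArg Subtype.val h)
    obtain ⟨w, hw⟩ := ih Xv' Z hcard'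
    refine ⟨SimpleGraph.Walk.cons adj1 (SimpleGraph.Walk.cons adj2 w), ?_⟩
    simp only [SimpleGraph.Walk.length_cons]
    omega

end Stmt13Aux

theorem stmt13 (n k h' h'' : ℕ) (h1 : 2 * k + 2 ≤ n) (h2 : n ≤ 4 * k - 3)
    (A B Y : SGVert n k) (hcap1 : (A.1 ∩ Y.1).card = h') (hcap2 : (Y.1 ∩ B.1).card = h'')
    (hsum : 2 ≤ h' + h'') :
    (SG n k).dist A B ≤ 2 + 2 * (h' + h'') := by
  have hk : 1 ≤ k := by omega
  obtain ⟨w1, hw1⟩ := Stmt13Aux.walk_le h1 hk h' A Y hcap1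
  obtain ⟨w2, hw2⟩ := Stmt13Aux.walk_le h1 hk h'' Y B hcap2
  have := SimpleGraph.dist_le (w1.append w2)
  rw [SimpleGraph.Walk.length_append] at this
  omega
end

section
/- Every vertex A of SG(2k+2,k) whose complement (in the (2k+2)-cycle) has a connected component of order 3 has degree exactly k + 2 in SG(2k+2,k); every other vertex of SG(2k+2,k) has degree exactly 4. -/
instance instNZ (k : ℕ) : NeZero (2*k+2) := ⟨by omega⟩

lemma add1_ne (k : ℕ) (x : ZMod (2*k+2)) : x + 1 ≠ x := by
  intro h
  have hc : ((1:ℕ) : ZMod (2*k+2)) = 0 := by have h' := congrArg (· - x) h; simpa using h'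
  rw [ZMod.natCast_eq_zero_iff] at hc
  exact absurd (Nat.le_of_dvd (by omega) hc) (by omega)

lemma add2_ne (k : ℕ) (hk : 1 ≤ k) (x : ZMod (2*k+2)) : x + 2 ≠ x := by
  intro h
  have hc : ((2:ℕ) : ZMod (2*k+2)) = 0 := by have h' := congrArg (· - x) h; push_cast at h' ⊢; simpa using h'
  rw [ZMod.natCast_eq_zero_iff] at hc
  exact absurd (Nat.le_of_dvd (by omega) hc) (by omega)


lemma edge_card (k : ℕ) (A : SGVert (2*k+2) k) :
    ((A.1ᶜ).filter (fun t => t + 1 ∈ A.1ᶜ)).card = 2 := by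
  classical
  have himg : (A.1 ∪ A.1.image (· - 1))ᶜ = (A.1ᶜ).filter (fun t => t + 1 ∈ A.1ᶜ) := by
    ext x
    simp only [Finset.mem_compl, Finset.mem_union, Finset.mem_filter, Finset.mem_image,
      not_or, not_exists, not_and, sub_eq_iff_eq_add]
    constructor
    · rintro ⟨h1, h2⟩
      exact ⟨h1, fun hx => h2 _ hx rfl⟩
    · rintro ⟨h1, h2⟩
      exact ⟨h1, fun a ha hax => by subst hax; exact h2 ha⟩
  have hdisj : Disjoint A.1 (A.1.image (· - 1)) := by
    rw [Finset.disjoint_right]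
    rintro x hx hxA
    simp only [Finset.mem_image, sub_eq_iff_eq_add] at hx
    obtain ⟨a, ha, rfl⟩ := hx
    exact A.2.2 _ hxA ha
  have hcard : (A.1 ∪ A.1.image (· - 1)).card = 2 * k := by
    rw [Finset.card_union_of_disjoint hdisj, Finset.card_image_of_injective _ (sub_left_injective), A.2.1]
    omega
  rw [← himg, Finset.card_compl, hcard, ZMod.card]; omega

lemma Tcard (k : ℕ) (A : SGVert (2*k+2) k) : (A.1ᶜ).card = k + 2 := by
  rw [Finset.card_compl, A.2.1, ZMod.card]; omega

lemma mem_nb (k : ℕ) (hk : 1 ≤ k) (A B : SGVert (2*k+2) k) :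
    B ∈ (SG (2*k+2) k).neighborSet A ↔ B.1 ⊆ A.1ᶜ := by
  constructor
  · rintro ⟨-, hd⟩
    intro b hb
    exact Finset.mem_compl.mpr (Finset.disjoint_right.mp hd hb)
  · intro h
    refine ⟨?_, Finset.disjoint_right.mpr (fun b hb => Finset.mem_compl.mp (h hb))⟩
    intro hAB
    obtain ⟨a, ha⟩ := Finset.card_pos.mp (by rw [A.2.1]; omega : 0 < A.1.card)
    exact Finset.mem_compl.mp (h (hAB ▸ ha)) ha

lemma nb_mk (k : ℕ) (hk : 1 ≤ k) (A : SGVert (2*k+2) k) (x y : ZMod (2*k+2))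
    (hx : x ∈ A.1ᶜ) (hy : y ∈ A.1ᶜ) (hxy : x ≠ y)
    (hcov : ∀ t, t ∈ A.1ᶜ → t + 1 ∈ A.1ᶜ → (t = x ∨ t = y ∨ t + 1 = x ∨ t + 1 = y)) :
    (A.1ᶜ \ {x, y}).card = k ∧ Stable2 (2*k+2) (A.1ᶜ \ {x, y}) := by
  constructor
  · rw [Finset.card_sdiff_of_subset (by intro z hz; simp only [Finset.mem_insert, Finset.mem_singleton] at hz; rcases hz with rfl|rfl <;> assumption),
      Tcard, Finset.card_pair hxy]; omega
  · intro i hi hi1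
    simp only [Finset.mem_sdiff, Finset.mem_insert, Finset.mem_singleton, not_or] at hi hi1
    rcases hcov i hi.1 hi1.1 with h|h|h|h
    · exact hi.2.1 h
    · exact hi.2.2 h
    · exact hi1.2.1 h
    · exact hi1.2.2 h

lemma count_case1 (k : ℕ) (hk : 1 ≤ k) (A : SGVert (2*k+2) k) (e : ZMod (2*k+2))
    (key : ∀ t, (t ∈ A.1ᶜ ∧ t + 1 ∈ A.1ᶜ) ↔ (t = e ∨ t = e + 1)) :
    Nat.card ((SG (2*k+2) k).neighborSet A) = k + 2 := by
  classical
  have he : e ∈ A.1ᶜ := ((key e).mpr (Or.inl rfl)).1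
  have he1 : e + 1 ∈ A.1ᶜ := ((key e).mpr (Or.inl rfl)).2
  have he2 : e + 2 ∈ A.1ᶜ := by
    have h := ((key (e+1)).mpr (Or.inr rfl)).2
    rwa [add_assoc, one_add_one_eq_two] at h
  have hee2 : e ≠ e + 2 := fun h => add2_ne k hk e h.symm
  have he1e : e + 1 ≠ e := add1_ne k e
  have he1e2 : e + 1 ≠ e + 2 := by
    intro h; rw [show e + 2 = (e+1)+1 by ring] at h; exact add1_ne k (e+1) h.symm
  have hB0 := nb_mk k hk A e (e+2) he he2 hee2 (by
    intro t ht ht1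
    rcases (key t).mp ⟨ht, ht1⟩ with rfl | rfl
    · exact Or.inl rfl
    · refine Or.inr (Or.inr (Or.inr ?_)); ring)
  have hBy : ∀ y : ZMod (2*k+2), y ∈ A.1ᶜ → y ≠ e + 1 →
      (A.1ᶜ \ {e+1, y}).card = k ∧ Stable2 (2*k+2) (A.1ᶜ \ {e+1, y}) := by
    intro y hy hyne
    refine nb_mk k hk A (e+1) y he1 hy (fun h => hyne h.symm) ?_
    intro t ht ht1
    rcases (key t).mp ⟨ht, ht1⟩ with rfl | rfl
    · exact Or.inr (Or.inr (Or.inl rfl))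
    · exact Or.inl rfl
  let f : {y // y ∈ A.1ᶜ} → ↥((SG (2*k+2) k).neighborSet A) := fun y =>
    if h : (y : ZMod (2*k+2)) = e + 1 then
      ⟨⟨A.1ᶜ \ {e, e+2}, hB0⟩, (mem_nb k hk A _).mpr Finset.sdiff_subset⟩
    else
      ⟨⟨A.1ᶜ \ {e+1, (y : ZMod (2*k+2))}, hBy y y.2 h⟩, (mem_nb k hk A _).mpr Finset.sdiff_subset⟩
  have he1mem : e + 1 ∈ A.1ᶜ \ {e, e+2} :=
    Finset.mem_sdiff.mpr ⟨he1, by simp [he1e, he1e2]⟩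
  have hinj : Function.Injective f := by
    intro y1 y2 hf
    by_cases h1 : (y1 : ZMod (2*k+2)) = e + 1 <;> by_cases h2 : (y2 : ZMod (2*k+2)) = e + 1
    · exact Subtype.ext (h1.trans h2.symm)
    · exfalso
      simp only [f, dif_pos h1, dif_neg h2] at hf
      have hval : (A.1ᶜ \ {e, e+2}) = (A.1ᶜ \ {e+1, (y2 : ZMod (2*k+2))}) :=
        congrArg (fun z => z.1.1) hf
      rw [hval] at he1mem
      exact (Finset.mem_sdiff.mp he1mem).2 (Finset.mem_insert_self _ _)
    · exfalso
      simp only [f, dif_neg h1, dif_pos h2] at hf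
      have hval : (A.1ᶜ \ {e+1, (y1 : ZMod (2*k+2))}) = (A.1ᶜ \ {e, e+2}) :=
        congrArg (fun z => z.1.1) hf
      rw [← hval] at he1mem
      exact (Finset.mem_sdiff.mp he1mem).2 (Finset.mem_insert_self _ _)
    · simp only [f, dif_neg h1, dif_neg h2] at hf
      have hval : (A.1ᶜ \ {e+1, (y1 : ZMod (2*k+2))}) = (A.1ᶜ \ {e+1, (y2 : ZMod (2*k+2))}) :=
        congrArg (fun z => z.1.1) hf
      have hy1 : (y1 : ZMod (2*k+2)) ∉ A.1ᶜ \ {e+1, (y1 : ZMod (2*k+2))} := by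
        simp
      rw [hval] at hy1
      have hmem : (y1 : ZMod (2*k+2)) ∈ ({e+1, (y2 : ZMod (2*k+2))} : Finset _) := by
        by_contra hcon
        exact hy1 (Finset.mem_sdiff.mpr ⟨y1.2, hcon⟩)
      rcases Finset.mem_insert.mp hmem with h | h
      · exact absurd h h1
      · exact Subtype.ext (Finset.mem_singleton.mp h)
  have hsurj : Function.Surjective f := by
    rintro ⟨B, hB⟩
    have hsub : B.1 ⊆ A.1ᶜ := (mem_nb k hk A B).mp hB
    have hrec : A.1ᶜ \ (A.1ᶜ \ B.1) = B.1 := Finset.sdiff_sdiff_eq_self hsub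
    set S := A.1ᶜ \ B.1 with hSdef
    have hScard : S.card = 2 := by
      rw [hSdef, Finset.card_sdiff_of_subset hsub, Tcard, B.2.1]; omega
    have hmemS : ∀ t, t ∈ A.1ᶜ → t ∉ S → t ∈ B.1 := by
      intro t ht htS
      have : t ∈ A.1ᶜ \ S := Finset.mem_sdiff.mpr ⟨ht, htS⟩
      rwa [hrec] at this
    have hcov1 : e ∈ S ∨ e + 1 ∈ S := by
      by_contra hc; push_neg at hc
      exact B.2.2 e (hmemS e he hc.1) (hmemS (e+1) he1 hc.2)
    have hcov2 : e + 1 ∈ S ∨ e + 2 ∈ S := by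
      by_contra hc; push_neg at hc
      have := B.2.2 (e+1) (hmemS (e+1) he1 hc.1)
      rw [add_assoc, one_add_one_eq_two] at this
      exact this (hmemS (e+2) he2 hc.2)
    by_cases hc : e + 1 ∈ S
    · obtain ⟨y, hy⟩ := Finset.card_eq_one.mp
        (by rw [Finset.card_erase_of_mem hc, hScard] : (S.erase (e+1)).card = 1)
      have hymem : y ∈ S.erase (e+1) := hy ▸ Finset.mem_singleton_self y
      have hyS : y ∈ S := Finset.mem_of_mem_erase hymem
      have hyne : y ≠ e + 1 := Finset.ne_of_mem_erase hymem
      have hyT : y ∈ A.1ᶜ := (Finset.sdiff_subset) hyS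
      have hSeq : S = {e+1, y} := by
        rw [← Finset.insert_erase hc, hy]
      refine ⟨⟨y, hyT⟩, ?_⟩
      apply Subtype.ext
      apply Subtype.ext
      show (f ⟨y, hyT⟩).1.1 = B.1
      simp only [f, dif_neg hyne]
      rw [← hrec, hSeq]
    · have h_e : e ∈ S := hcov1.resolve_right hc
      have h_e2 : e + 2 ∈ S := hcov2.resolve_left hc
      have hSeq : S = {e, e+2} := by
        refine (Finset.eq_of_subset_of_card_le ?_ ?_).symm
        · intro z hz
          simp only [Finset.mem_insert, Finset.mem_singleton] at hz
          rcases hz with rfl | rfl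
          · exact h_e
          · exact h_e2
        · rw [hScard, Finset.card_pair hee2]
      refine ⟨⟨e+1, he1⟩, ?_⟩
      apply Subtype.ext
      apply Subtype.ext
      show (f ⟨e+1, he1⟩).1.1 = B.1
      simp only [f, dif_pos rfl]
      rw [← hrec, hSeq]
  rw [← Nat.card_eq_of_bijective f ⟨hinj, hsurj⟩, Nat.card_eq_fintype_card,
    Fintype.card_coe, Tcard]

lemma count_case2 (k : ℕ) (hk : 1 ≤ k) (A : SGVert (2*k+2) k) (e f : ZMod (2*k+2))
    (hd1 : e ≠ f) (hd2 : e + 1 ≠ f) (hd3 : e ≠ f + 1)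
    (key : ∀ t, (t ∈ A.1ᶜ ∧ t + 1 ∈ A.1ᶜ) ↔ (t = e ∨ t = f)) :
    Nat.card ((SG (2*k+2) k).neighborSet A) = 4 := by
  classical
  have he : e ∈ A.1ᶜ := ((key e).mpr (Or.inl rfl)).1
  have he1 : e + 1 ∈ A.1ᶜ := ((key e).mpr (Or.inl rfl)).2
  have hf : f ∈ A.1ᶜ := ((key f).mpr (Or.inr rfl)).1
  have hf1 : f + 1 ∈ A.1ᶜ := ((key f).mpr (Or.inr rfl)).2
  have hd4 : e + 1 ≠ f + 1 := fun h => hd1 (add_right_cancel h)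
  have hee1 : e ≠ e + 1 := (add1_ne k e).symm
  have hff1 : f ≠ f + 1 := (add1_ne k f).symm
  let pe : Bool → ZMod (2*k+2) := fun a => bif a then e else e + 1
  let pf : Bool → ZMod (2*k+2) := fun b => bif b then f else f + 1
  have hpeT : ∀ a, pe a ∈ A.1ᶜ := by intro a; cases a; exacts [he1, he]
  have hpfT : ∀ b, pf b ∈ A.1ᶜ := by intro b; cases b; exacts [hf1, hf]
  have hpne : ∀ a b, pe a ≠ pf b := by
    intro a b; cases a <;> cases b <;> simp [pe, pf, hd1, hd2, hd3, hd4]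
  have hcov : ∀ (a b : Bool), ∀ t, t ∈ A.1ᶜ → t + 1 ∈ A.1ᶜ →
      (t = pe a ∨ t = pf b ∨ t + 1 = pe a ∨ t + 1 = pf b) := by
    intro a b t ht ht1
    rcases (key t).mp ⟨ht, ht1⟩ with rfl | rfl
    · cases a
      · refine Or.inr (Or.inr (Or.inl ?_)); simp [pe]
      · exact Or.inl (by simp [pe])
    · cases b
      · refine Or.inr (Or.inr (Or.inr ?_)); simp [pf]
      · exact Or.inr (Or.inl (by simp [pf]))
  let g : Bool × Bool → ↥((SG (2*k+2) k).neighborSet A) := fun p =>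
    ⟨⟨A.1ᶜ \ {pe p.1, pf p.2},
        nb_mk k hk A (pe p.1) (pf p.2) (hpeT _) (hpfT _) (hpne _ _) (hcov p.1 p.2)⟩,
      (mem_nb k hk A _).mpr Finset.sdiff_subset⟩
  have hememb : ∀ p : Bool × Bool, (e ∈ (g p).1.1 ↔ p.1 = false) := by
    rintro ⟨a, b⟩
    cases a <;> cases b <;> simp [g, pe, pf, he, hd1, hd3, hee1]
  have hfmemb : ∀ p : Bool × Bool, (f ∈ (g p).1.1 ↔ p.2 = false) := by
    rintro ⟨a, b⟩
    cases a <;> cases b <;> simp [g, pe, pf, hf, hd1.symm, hd2.symm, hff1]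
  have hinj : Function.Injective g := by
    intro p q hpq
    have hval : (g p).1.1 = (g q).1.1 := congrArg (fun z => z.1.1) hpq
    have hiff1 : (p.1 = false) ↔ (q.1 = false) := by
      rw [← hememb p, hval, hememb q]
    have hiff2 : (p.2 = false) ↔ (q.2 = false) := by
      rw [← hfmemb p, hval, hfmemb q]
    have h1 : p.1 = q.1 := by
      cases hp : p.1 <;> cases hq : q.1 <;> simp_all
    have h2 : p.2 = q.2 := by
      cases hp : p.2 <;> cases hq : q.2 <;> simp_all
    exact Prod.ext h1 h2
  have hsurj : Function.Surjective g := by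
    rintro ⟨B, hB⟩
    have hsub : B.1 ⊆ A.1ᶜ := (mem_nb k hk A B).mp hB
    have hrec : A.1ᶜ \ (A.1ᶜ \ B.1) = B.1 := Finset.sdiff_sdiff_eq_self hsub
    set S := A.1ᶜ \ B.1 with hSdef
    have hScard : S.card = 2 := by
      rw [hSdef, Finset.card_sdiff_of_subset hsub, Tcard, B.2.1]; omega
    have hmemS : ∀ t, t ∈ A.1ᶜ → t ∉ S → t ∈ B.1 := by
      intro t ht htS
      have : t ∈ A.1ᶜ \ S := Finset.mem_sdiff.mpr ⟨ht, htS⟩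
      rwa [hrec] at this
    have hcov1 : e ∈ S ∨ e + 1 ∈ S := by
      by_contra hc; push_neg at hc
      exact B.2.2 e (hmemS e he hc.1) (hmemS (e+1) he1 hc.2)
    have hcov2 : f ∈ S ∨ f + 1 ∈ S := by
      by_contra hc; push_neg at hc
      exact B.2.2 f (hmemS f hf hc.1) (hmemS (f+1) hf1 hc.2)
    obtain ⟨a, haS⟩ : ∃ a, pe a ∈ S := by
      by_cases hae : e ∈ S
      · exact ⟨true, by simpa [pe] using hae⟩
      · exact ⟨false, by simpa [pe] using hcov1.resolve_left hae⟩
    obtain ⟨b, hbS⟩ : ∃ b, pf b ∈ S := by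
      by_cases hbf : f ∈ S
      · exact ⟨true, by simpa [pf] using hbf⟩
      · exact ⟨false, by simpa [pf] using hcov2.resolve_left hbf⟩
    have hSeq : S = {pe a, pf b} := by
      refine (Finset.eq_of_subset_of_card_le ?_ ?_).symm
      · intro z hz
        simp only [Finset.mem_insert, Finset.mem_singleton] at hz
        rcases hz with rfl | rfl
        · exact haS
        · exact hbS
      · rw [hScard, Finset.card_pair (hpne a b)]
    refine ⟨(a, b), ?_⟩
    apply Subtype.ext
    apply Subtype.ext
    show (g (a, b)).1.1 = B.1
    simp only [g]
    rw [← hrec, hSeq]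
  rw [← Nat.card_eq_of_bijective g ⟨hinj, hsurj⟩, Nat.card_eq_fintype_card]
  simp


lemma walk_subset {V : Type*} {G : SimpleGraph V} (s : Set V)
    (hs : ∀ x y, x ∈ s → G.Adj x y → y ∈ s) :
    ∀ {v w : V}, G.Walk v w → v ∈ s → w ∈ s := by
  intro v w p
  induction p with
  | nil => exact id
  | cons h p ih => intro hv; exact ih (hs _ _ hv h)

lemma walk_small {V : Type*} {G : SimpleGraph V}
    (h1 : ∀ x y z, G.Adj x y → G.Adj x z → y = z) :
    ∀ {v w : V}, G.Walk v w → w = v ∨ G.Adj v w := by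
  intro v w p
  induction p with
  | nil => exact Or.inl rfl
  | cons h _ ih =>
    rcases ih with rfl | ha
    · exact Or.inr h
    · exact Or.inl (h1 _ _ _ ha h.symm)

lemma comp_small (k : ℕ) (hk : 1 ≤ k) (A : SGVert (2*k+2) k)
    (hP : ¬ ∃ x, x ∈ A.1ᶜ ∧ x + 1 ∈ A.1ᶜ ∧ x + 2 ∈ A.1ᶜ)
    (C : ((CycleGraph (2*k+2)).induce
        ((↑A.1 : Set (ZMod (2*k+2)))ᶜ)).ConnectedComponent) :
    Nat.card C.supp ≤ 2 := by
  classical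
  let G' := (CycleGraph (2*k+2)).induce ((↑A.1 : Set (ZMod (2*k+2)))ᶜ)
  have hmem : ∀ w : ((↑A.1 : Set (ZMod (2*k+2)))ᶜ : Set _), (w : ZMod (2*k+2)) ∈ A.1ᶜ := by
    intro w
    have := w.2
    simp only [Set.mem_compl_iff, Finset.mem_coe] at this
    exact Finset.mem_compl.mpr this
  have h1 : ∀ x y z, G'.Adj x y → G'.Adj x z → y = z := by
    intro x y z hxy hxz
    obtain ⟨hne1, hor1⟩ : (↑x : ZMod (2*k+2)) ≠ ↑y ∧ ((↑x:ZMod (2*k+2)) + 1 = ↑y ∨ (↑y:ZMod (2*k+2)) + 1 = ↑x) := hxy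
    obtain ⟨hne2, hor2⟩ : (↑x : ZMod (2*k+2)) ≠ ↑z ∧ ((↑x:ZMod (2*k+2)) + 1 = ↑z ∨ (↑z:ZMod (2*k+2)) + 1 = ↑x) := hxz
    rcases hor1 with h1 | h1 <;> rcases hor2 with h2 | h2
    · exact Subtype.ext (h1 ▸ h2 ▸ rfl)
    · exfalso
      refine hP ⟨↑z, hmem z, ?_, ?_⟩
      · rw [h2]; exact hmem x
      · rw [show (↑z:ZMod (2*k+2)) + 2 = ((↑z:ZMod (2*k+2)) + 1) + 1 by ring, h2, h1]
        exact hmem y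
    · exfalso
      refine hP ⟨↑y, hmem y, ?_, ?_⟩
      · rw [h1]; exact hmem x
      · rw [show (↑y:ZMod (2*k+2)) + 2 = ((↑y:ZMod (2*k+2)) + 1) + 1 by ring, h1, h2]
        exact hmem z
    · exact Subtype.ext (add_right_cancel (h1.trans h2.symm))
  obtain ⟨v, hv⟩ := C.exists_rep
  have hsupp : ∀ w, w ∈ C.supp → w = v ∨ G'.Adj v w := by
    intro w hw
    rw [SimpleGraph.ConnectedComponent.mem_supp_iff, ← hv] at hw
    obtain ⟨p⟩ := (SimpleGraph.ConnectedComponent.exact hw).symm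
    exact walk_small h1 p
  by_cases hEx : ∃ u, G'.Adj v u
  · obtain ⟨u, hu⟩ := hEx
    have hsub : C.supp ⊆ {v, u} := by
      intro w hw
      rcases hsupp w hw with rfl | ha
      · exact Set.mem_insert _ _
      · exact Set.mem_insert_of_mem _ (Set.mem_singleton_iff.mpr (h1 _ _ _ ha hu))
    calc Nat.card C.supp = C.supp.ncard := Nat.card_coe_set_eq _
      _ ≤ ({v, u} : Set _).ncard := Set.ncard_le_ncard hsub (Set.toFinite _)
      _ ≤ ({u} : Set _).ncard + 1 := Set.ncard_insert_le _ _
      _ ≤ 2 := by rw [Set.ncard_singleton]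
  · have hsub : C.supp ⊆ {v} := by
      intro w hw
      rcases hsupp w hw with rfl | ha
      · exact Set.mem_singleton _
      · exact absurd ⟨w, ha⟩ hEx
    calc Nat.card C.supp = C.supp.ncard := Nat.card_coe_set_eq _
      _ ≤ ({v} : Set _).ncard := Set.ncard_le_ncard hsub (Set.toFinite _)
      _ ≤ 2 := by rw [Set.ncard_singleton]; omega

lemma comp_three (k : ℕ) (hk : 1 ≤ k) (A : SGVert (2*k+2) k) (x : ZMod (2*k+2))
    (key : ∀ t, (t ∈ A.1ᶜ ∧ t + 1 ∈ A.1ᶜ) ↔ (t = x ∨ t = x + 1)) :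
    ∃ C : ((CycleGraph (2*k+2)).induce
        ((↑A.1 : Set (ZMod (2*k+2)))ᶜ)).ConnectedComponent, Nat.card C.supp = 3 := by
  classical
  let G' := (CycleGraph (2*k+2)).induce ((↑A.1 : Set (ZMod (2*k+2)))ᶜ)
  have hx : x ∈ A.1ᶜ := ((key x).mpr (Or.inl rfl)).1
  have hx1 : x + 1 ∈ A.1ᶜ := ((key x).mpr (Or.inl rfl)).2
  have hx2 : x + 2 ∈ A.1ᶜ := by
    have h := ((key (x+1)).mpr (Or.inr rfl)).2
    rwa [add_assoc, one_add_one_eq_two] at h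
  have hconv : ∀ z : ZMod (2*k+2), z ∈ A.1ᶜ → z ∈ ((↑A.1 : Set (ZMod (2*k+2)))ᶜ) := by
    intro z hz
    simp only [Set.mem_compl_iff, Finset.mem_coe]
    exact Finset.mem_compl.mp hz
  have hmem : ∀ w : ((↑A.1 : Set (ZMod (2*k+2)))ᶜ : Set _), (w : ZMod (2*k+2)) ∈ A.1ᶜ := by
    intro w
    have := w.2
    simp only [Set.mem_compl_iff, Finset.mem_coe] at this
    exact Finset.mem_compl.mpr this
  have h10 : x + 1 ≠ x := add1_ne k x
  have h20 : x + 2 ≠ x := add2_ne k hk x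
  have h21 : x + 2 ≠ x + 1 := by
    rw [show x + 2 = (x+1)+1 by ring]; exact add1_ne k (x+1)
  let v0 : ((↑A.1 : Set (ZMod (2*k+2)))ᶜ : Set _) := ⟨x, hconv x hx⟩
  let v1 : ((↑A.1 : Set (ZMod (2*k+2)))ᶜ : Set _) := ⟨x+1, hconv _ hx1⟩
  let v2 : ((↑A.1 : Set (ZMod (2*k+2)))ᶜ : Set _) := ⟨x+2, hconv _ hx2⟩
  have hadj01 : G'.Adj v0 v1 := ⟨Ne.symm h10, Or.inl rfl⟩
  have hadj12 : G'.Adj v1 v2 := ⟨Ne.symm h21, Or.inl (by show (x+1)+1 = x+2; ring)⟩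
  refine ⟨G'.connectedComponentMk v1, ?_⟩
  have hclosed : ∀ w y : ((↑A.1 : Set (ZMod (2*k+2)))ᶜ : Set _),
      w ∈ ({v0, v1, v2} : Set _) → G'.Adj w y → y ∈ ({v0, v1, v2} : Set _) := by
    intro w y hw hadj
    obtain ⟨hne, hor⟩ : (↑w : ZMod (2*k+2)) ≠ ↑y ∧
      ((↑w:ZMod (2*k+2)) + 1 = ↑y ∨ (↑y:ZMod (2*k+2)) + 1 = ↑w) := hadj
    simp only [Set.mem_insert_iff, Set.mem_singleton_iff] at hw ⊢
    have hwc : (↑w : ZMod (2*k+2)) = x ∨ (↑w : ZMod (2*k+2)) = x + 1 ∨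
        (↑w : ZMod (2*k+2)) = x + 2 := by
      rcases hw with rfl | rfl | rfl
      · exact Or.inl rfl
      · exact Or.inr (Or.inl rfl)
      · exact Or.inr (Or.inr rfl)
    have goal : (↑y : ZMod (2*k+2)) = x ∨ (↑y : ZMod (2*k+2)) = x + 1 ∨
        (↑y : ZMod (2*k+2)) = x + 2 := by
      rcases hwc with hwx | hwx | hwx <;> rcases hor with h2 | h2
      · exact Or.inr (Or.inl (by rw [← h2, hwx]))
      · -- y + 1 = x : key at y
        exfalso
        rcases (key ↑y).mp ⟨hmem y, by rw [h2, hwx]; exact hx⟩ with hy | hy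
        · rw [hy, hwx] at h2; exact h10 h2
        · rw [hy, hwx] at h2
          rw [show (x+1)+1 = x + 2 by ring] at h2
          exact h20 h2
      · refine Or.inr (Or.inr ?_)
        rw [← h2, hwx]; ring
      · rcases (key ↑y).mp ⟨hmem y, by rw [h2, hwx]; exact hx1⟩ with hy | hy
        · exact Or.inl hy
        · exfalso
          rw [hy, hwx] at h2
          exact add1_ne k (x+1) h2
      · exfalso
        have : (↑w : ZMod (2*k+2)) + 1 ∈ A.1ᶜ := by rw [h2]; exact hmem y
        rcases (key ↑w).mp ⟨hmem w, this⟩ with hy | hy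
        · rw [hwx] at hy; exact h20 hy
        · rw [hwx] at hy; exact h21 hy
      · rcases (key ↑y).mp ⟨hmem y, by rw [h2, hwx]; exact hx2⟩ with hy | hy
        · exfalso
          rw [hy, hwx] at h2
          rw [show x + 2 = (x+1)+1 by ring] at h2
          exact add1_ne k (x+1) h2.symm
        · exact Or.inr (Or.inl hy)
    rcases goal with h | h | h
    · exact Or.inl (Subtype.ext h)
    · exact Or.inr (Or.inl (Subtype.ext h))
    · exact Or.inr (Or.inr (Subtype.ext h))
  have hsupp : (G'.connectedComponentMk v1).supp = {v0, v1, v2} := by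
    ext w
    rw [SimpleGraph.ConnectedComponent.mem_supp_iff]
    constructor
    · intro hw
      obtain ⟨p⟩ := (SimpleGraph.ConnectedComponent.exact hw).symm
      exact walk_subset _ hclosed p (Or.inr (Or.inl rfl))
    · intro hw
      simp only [Set.mem_insert_iff, Set.mem_singleton_iff] at hw
      rcases hw with rfl | rfl | rfl
      · exact SimpleGraph.ConnectedComponent.sound hadj01.reachable
      · rfl
      · exact SimpleGraph.ConnectedComponent.sound hadj12.symm.reachable
  rw [Nat.card_coe_set_eq, hsupp]
  have hd01 : v0 ∉ ({v1, v2} : Set _) := by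
    simp only [Set.mem_insert_iff, Set.mem_singleton_iff]
    push_neg
    exact ⟨fun h => h10 (congrArg Subtype.val h).symm, fun h => h20 (congrArg Subtype.val h).symm⟩
  have hd12 : v1 ≠ v2 := fun h => h21 (congrArg Subtype.val h).symm
  rw [Set.ncard_insert_of_notMem hd01, Set.ncard_pair hd12]


theorem stmt19 (k : ℕ) (hk : 1 ≤ k) (A : SGVert (2 * k + 2) k) :
    ((∃ C : ((CycleGraph (2 * k + 2)).induce
        ((↑A.1 : Set (ZMod (2 * k + 2)))ᶜ)).ConnectedComponent, Nat.card C.supp = 3) →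
      Nat.card ((SG (2 * k + 2) k).neighborSet A) = k + 2) ∧
    ((¬ ∃ C : ((CycleGraph (2 * k + 2)).induce
        ((↑A.1 : Set (ZMod (2 * k + 2)))ᶜ)).ConnectedComponent, Nat.card C.supp = 3) →
      Nat.card ((SG (2 * k + 2) k).neighborSet A) = 4) := by
  classical
  obtain ⟨e, f, hef, hE⟩ := Finset.card_eq_two.mp (edge_card k A)
  have key0 : ∀ t : ZMod (2*k+2), (t ∈ A.1ᶜ ∧ t + 1 ∈ A.1ᶜ) ↔ (t = e ∨ t = f) := by
    intro t
    constructor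
    · intro h
      have ht : t ∈ (A.1ᶜ).filter (fun t => t + 1 ∈ A.1ᶜ) := Finset.mem_filter.mpr h
      rw [hE] at ht
      simpa using ht
    · intro h
      have ht : t ∈ ({e, f} : Finset _) := by simpa using h
      rw [← hE] at ht
      exact Finset.mem_filter.mp ht
  by_cases hP : ∃ x : ZMod (2*k+2), x ∈ A.1ᶜ ∧ x + 1 ∈ A.1ᶜ ∧ x + 2 ∈ A.1ᶜ
  · obtain ⟨x, hx, hx1, hx2⟩ := hP
    have hxE : x = e ∨ x = f := (key0 x).mp ⟨hx, hx1⟩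
    have hx1E : x + 1 = e ∨ x + 1 = f :=
      (key0 (x+1)).mp ⟨hx1, by rwa [add_assoc, one_add_one_eq_two]⟩
    have hne : x + 1 ≠ x := add1_ne k x
    have key : ∀ t, (t ∈ A.1ᶜ ∧ t + 1 ∈ A.1ᶜ) ↔ (t = x ∨ t = x + 1) := by
      intro t
      rw [key0 t]
      rcases hxE with rfl | rfl
      · rcases hx1E with h1 | h1
        · exact absurd h1 hne
        · rw [← h1]
      · rcases hx1E with h1 | h1
        · rw [← h1]; exact or_comm
        · exact absurd h1 hne
    constructor
    · intro _; exact count_case1 k hk A x key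
    · intro hn; exact absurd (comp_three k hk A x key) hn
  · constructor
    · intro hC
      obtain ⟨C, hC3⟩ := hC
      have := comp_small k hk A hP C
      omega
    · intro _
      have he : e ∈ A.1ᶜ := ((key0 e).mpr (Or.inl rfl)).1
      have he1 : e + 1 ∈ A.1ᶜ := ((key0 e).mpr (Or.inl rfl)).2
      have hf : f ∈ A.1ᶜ := ((key0 f).mpr (Or.inr rfl)).1
      have hf1 : f + 1 ∈ A.1ᶜ := ((key0 f).mpr (Or.inr rfl)).2
      have hd2 : e + 1 ≠ f := by
        intro h
        exact hP ⟨e, he, he1, by rw [show e+2 = (e+1)+1 by ring, h]; exact hf1⟩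
      have hd3 : e ≠ f + 1 := by
        intro h
        exact hP ⟨f, hf, hf1, by rw [show f+2 = (f+1)+1 by ring, ← h]; exact he1⟩
      exact count_case2 k hk A e f hef hd2 hd3 key0
end
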